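/- arXiv:2004.08437 — 6 statements merged into one kernel-verified Lean document; each statement's English description precedes it below -/
import Mathlib

section
/- Let μ1, μ2 be nonzero real numbers and set μ3 = −μ1, μ4 = −μ2, and let θ2 ∈ (0, 2π) with θ2 ≠ π. Then (0, θ2, π, θ2 + π) is a critical point of V if and only if θ2 ∈ {π/4, 3π/4, 5π/4, 7π/4}. (With pairs of opposite circulations, the only rectangular configurations have each pair on a line, at an angle of π/4 from each other.) -/
open Real Polynomial

/-- The potential `V` for the (1+4)-vortex problem with circulation
parameters `μ` and angular positions `θ`. -/
noncomputable def V (μ θ : Fin 4 → ℝ) : ℝ :=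
  -∑ i : Fin 4, ∑ j ∈ Finset.Ioi i,
      μ i * μ j *
        (Real.cos (θ i - θ j) + (1 / 2) * Real.log (2 - 2 * Real.cos (θ i - θ j)))

/-- The partial derivative `∂V/∂θ_k` at the point `θ`. -/
noncomputable def partialV (μ θ : Fin 4 → ℝ) (k : Fin 4) : ℝ :=
  deriv (fun t => V μ (Function.update θ k t)) (θ k)

/-- `θ` is a critical point of `V`: all four partial derivatives vanish. -/
def IsCriticalPt (μ θ : Fin 4 → ℝ) : Prop :=
  ∀ k : Fin 4, partialV μ θ k = 0

/-- The Hessian matrix of `V` at `θ`, `H k l = ∂²V/∂θ_k ∂θ_l`. -/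
noncomputable def hessV (μ θ : Fin 4 → ℝ) : Matrix (Fin 4) (Fin 4) ℝ :=
  fun k l => deriv (fun t => partialV μ (Function.update θ k t) l) (θ k)

/- ### Auxiliary machinery -/

noncomputable def G (x : ℝ) : ℝ := Real.cos x + (1 / 2) * Real.log (2 - 2 * Real.cos x)

noncomputable def fD (x : ℝ) : ℝ := Real.sin x * ((2 - 2 * Real.cos x)⁻¹ - 1)

lemma hasDerivAt_G {x : ℝ} (hx : Real.cos x ≠ 1) : HasDerivAt G (fD x) x := by
  have h2 : (2 : ℝ) - 2 * Real.cos x ≠ 0 := by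
    intro h; exact hx (by linarith)
  have hinner : HasDerivAt (fun y => 2 - 2 * Real.cos y) (2 * Real.sin x) x := by
    simpa using ((Real.hasDerivAt_cos x).const_mul (2:ℝ)).const_sub 2
  have hlog := hinner.log h2
  have H := (Real.hasDerivAt_cos x).add (hlog.const_mul ((1:ℝ)/2))
  have he : -Real.sin x + 1/2 * (2 * Real.sin x / (2 - 2 * Real.cos x)) = fD x := by
    unfold fD; field_simp; ring
  unfold G
  exact he ▸ H

lemma hG1 (a : ℝ) {x : ℝ} (h : Real.cos (x - a) ≠ 1) :
    HasDerivAt (fun t => G (t - a)) (fD (x - a)) x := by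
  simpa [Function.comp_def] using (hasDerivAt_G h).comp x ((hasDerivAt_id x).sub_const a)

lemma hG2 (a : ℝ) {x : ℝ} (h : Real.cos (a - x) ≠ 1) :
    HasDerivAt (fun t => G (a - t)) (-fD (a - x)) x := by
  simpa [Function.comp_def] using (hasDerivAt_G h).comp x ((hasDerivAt_id x).const_sub a)

/- Function equality lemmas: `V` along each coordinate line. -/

section Feq
variable (μ1 μ2 θ2 : ℝ)

lemma succ2' : (Fin.succ (2 : Fin 3)) = (3 : Fin 4) := rfl

lemma cos_negsub (x y : ℝ) : Real.cos (-x - y) = Real.cos (x + y) := by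
  rw [show -x - y = -(x+y) from by ring, Real.cos_neg]

lemma cos_negadd (x y : ℝ) : Real.cos (-x + -y) = Real.cos (x + y) := by
  rw [show -x + -y = -(x+y) from by ring, Real.cos_neg]

lemma cos_pi_add' (x : ℝ) : Real.cos (π + x) = -Real.cos x := by
  rw [Real.cos_add]; simp

lemma cos_add_pi' (x : ℝ) : Real.cos (x + π) = -Real.cos x := by
  rw [Real.cos_add]; simp

lemma e0' : (Finset.Ioi (0 : Fin 4)) = {1,2,3} := by decide
lemma e1' : (Finset.Ioi (1 : Fin 4)) = {2,3} := by decide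
lemma e2' : (Finset.Ioi (2 : Fin 4)) = {3} := by decide
lemma e3' : (Finset.Ioi (3 : Fin 4)) = ∅ := by decide

set_option maxHeartbeats 1000000 in
lemma F0eq :
    (fun t => V ![μ1,μ2,-μ1,-μ2] (Function.update ![0,θ2,π,θ2+π] 0 t)) =
    (fun t => -(μ1*μ2 * G (t - θ2) + μ1*(-μ1) * G (t - π) + μ1*(-μ2) * G (t - (θ2+π))
        + μ2*(-μ1) * G (θ2 - π) + μ2*(-μ2) * G (θ2 - (θ2+π)) + (-μ1)*(-μ2) * G (π - (θ2+π)))) := by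
  funext t
  simp [V, G, Fin.sum_univ_four, Fin.sum_univ_three, succ2', cos_negsub, cos_negadd, cos_pi_add', cos_add_pi', e0', e1', e2', e3', Function.update]
  ring

set_option maxHeartbeats 1000000 in
lemma F1eq :
    (fun t => V ![μ1,μ2,-μ1,-μ2] (Function.update ![0,θ2,π,θ2+π] 1 t)) =
    (fun t => -(μ1*μ2 * G (0 - t) + μ1*(-μ1) * G (0 - π) + μ1*(-μ2) * G (0 - (θ2+π))
        + μ2*(-μ1) * G (t - π) + μ2*(-μ2) * G (t - (θ2+π)) + (-μ1)*(-μ2) * G (π - (θ2+π)))) := by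
  funext t
  simp [V, G, Fin.sum_univ_four, Fin.sum_univ_three, succ2', cos_negsub, cos_negadd, cos_pi_add', cos_add_pi', e0', e1', e2', e3', Function.update]
  ring

set_option maxHeartbeats 1000000 in
lemma F2eq :
    (fun t => V ![μ1,μ2,-μ1,-μ2] (Function.update ![0,θ2,π,θ2+π] 2 t)) =
    (fun t => -(μ1*μ2 * G (0 - θ2) + μ1*(-μ1) * G (0 - t) + μ1*(-μ2) * G (0 - (θ2+π))
        + μ2*(-μ1) * G (θ2 - t) + μ2*(-μ2) * G (θ2 - (θ2+π)) + (-μ1)*(-μ2) * G (t - (θ2+π)))) := by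
  funext t
  simp [V, G, Fin.sum_univ_four, Fin.sum_univ_three, succ2', cos_negsub, cos_negadd, cos_pi_add', cos_add_pi', e0', e1', e2', e3', Function.update]
  ring

set_option maxHeartbeats 1000000 in
lemma F3eq :
    (fun t => V ![μ1,μ2,-μ1,-μ2] (Function.update ![0,θ2,π,θ2+π] 3 t)) =
    (fun t => -(μ1*μ2 * G (0 - θ2) + μ1*(-μ1) * G (0 - π) + μ1*(-μ2) * G (0 - t)
        + μ2*(-μ1) * G (θ2 - π) + μ2*(-μ2) * G (θ2 - t) + (-μ1)*(-μ2) * G (π - t))) := by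
  funext t
  simp [V, G, Fin.sum_univ_four, Fin.sum_univ_three, succ2', cos_negsub, cos_negadd, cos_pi_add', cos_add_pi', e0', e1', e2', e3', Function.update]
  ring

end Feq

set_option maxHeartbeats 1000000 in
/-- With pairs of opposite circulations, the only rectangular configurations
have `theta2` in `{pi/4, 3pi/4, 5pi/4, 7pi/4}`. -/
theorem rectangle_opposite_pairs (μ1 μ2 θ2 : ℝ)
    (h1 : μ1 ≠ 0) (h2 : μ2 ≠ 0)
    (hθ : θ2 ∈ Set.Ioo (0 : ℝ) (2 * π)) (hθπ : θ2 ≠ π) :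
    IsCriticalPt ![μ1, μ2, -μ1, -μ2] ![0, θ2, π, θ2 + π] ↔
      θ2 ∈ ({π / 4, 3 * π / 4, 5 * π / 4, 7 * π / 4} : Set ℝ) := by
  obtain ⟨hθ0, hθ2π⟩ := hθ
  have hπ := Real.pi_pos
  have hs : Real.sin θ2 ≠ 0 := by
    intro h
    obtain ⟨n, hn⟩ := Real.sin_eq_zero_iff.mp h
    have hn0 : (0:ℝ) < n * π := hn ▸ hθ0
    have hn2 : (n:ℝ) * π < 2 * π := hn ▸ hθ2π
    have h1n : (0:ℤ) < n := by
      by_contra hc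
      push_neg at hc
      have : (n:ℝ) ≤ 0 := by exact_mod_cast hc
      nlinarith
    have h2n : (n:ℤ) < 2 := by
      by_contra hc
      push_neg at hc
      have : (2:ℝ) ≤ (n:ℝ) := by exact_mod_cast hc
      nlinarith
    have : n = 1 := by omega
    subst this
    simp at hn
    exact hθπ hn.symm
  have hc1 : Real.cos θ2 ≠ 1 := by
    intro h
    have := Real.sin_sq_add_cos_sq θ2
    have : Real.sin θ2 = 0 := by nlinarith
    exact hs this
  have hcm1 : Real.cos θ2 ≠ -1 := by
    intro h
    have := Real.sin_sq_add_cos_sq θ2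
    have : Real.sin θ2 = 0 := by nlinarith
    exact hs this
  have A1 : Real.cos ((0:ℝ) - θ2) ≠ 1 := by simpa using hc1
  have A2 : Real.cos ((0:ℝ) - π) ≠ 1 := by norm_num
  have A3 : Real.cos ((0:ℝ) - (θ2 + π)) ≠ 1 := by
    rw [zero_sub, Real.cos_neg, Real.cos_add]
    simp only [Real.cos_pi, Real.sin_pi]
    intro h; exact hcm1 (by nlinarith)
  have A4 : Real.cos (θ2 - π) ≠ 1 := by
    rw [Real.cos_sub]
    simp only [Real.cos_pi, Real.sin_pi]
    intro h; exact hcm1 (by nlinarith)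
  have A5 : Real.cos (θ2 - (θ2 + π)) ≠ 1 := by
    have h' : θ2 - (θ2 + π) = -π := by ring
    rw [h', Real.cos_neg, Real.cos_pi]; norm_num
  have A6 : Real.cos (π - (θ2 + π)) ≠ 1 := by
    have h' : π - (θ2 + π) = -θ2 := by ring
    rw [h', Real.cos_neg]; exact hc1
  -- the four partial derivatives
  have p0 : partialV ![μ1,μ2,-μ1,-μ2] ![0,θ2,π,θ2+π] 0 =
      -(μ1*μ2 * fD (0 - θ2) + μ1*(-μ1) * fD (0 - π) + μ1*(-μ2) * fD (0 - (θ2+π)) + 0 + 0 + 0) := by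
    have H : HasDerivAt (fun t => -(μ1*μ2 * G (t - θ2) + μ1*(-μ1) * G (t - π) + μ1*(-μ2) * G (t - (θ2+π))
        + μ2*(-μ1) * G (θ2 - π) + μ2*(-μ2) * G (θ2 - (θ2+π)) + (-μ1)*(-μ2) * G (π - (θ2+π))))
        (-(μ1*μ2 * fD (0 - θ2) + μ1*(-μ1) * fD (0 - π) + μ1*(-μ2) * fD (0 - (θ2+π)) + 0 + 0 + 0)) (0:ℝ) :=
      (((((((hG1 θ2 A1).const_mul (μ1*μ2)).add ((hG1 π A2).const_mul (μ1*(-μ1)))).add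
        ((hG1 (θ2+π) A3).const_mul (μ1*(-μ2)))).add (hasDerivAt_const _ _)).add
        (hasDerivAt_const _ _)).add (hasDerivAt_const _ _)).neg
    have h0 : (![0,θ2,π,θ2+π] : Fin 4 → ℝ) 0 = 0 := rfl
    rw [partialV, F0eq, h0]
    exact H.deriv
  have p1 : partialV ![μ1,μ2,-μ1,-μ2] ![0,θ2,π,θ2+π] 1 =
      -(μ1*μ2 * (-fD (0 - θ2)) + 0 + 0 + μ2*(-μ1) * fD (θ2 - π) + μ2*(-μ2) * fD (θ2 - (θ2+π)) + 0) := by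
    have H : HasDerivAt (fun t => -(μ1*μ2 * G (0 - t) + μ1*(-μ1) * G (0 - π) + μ1*(-μ2) * G (0 - (θ2+π))
        + μ2*(-μ1) * G (t - π) + μ2*(-μ2) * G (t - (θ2+π)) + (-μ1)*(-μ2) * G (π - (θ2+π))))
        (-(μ1*μ2 * (-fD (0 - θ2)) + 0 + 0 + μ2*(-μ1) * fD (θ2 - π) + μ2*(-μ2) * fD (θ2 - (θ2+π)) + 0)) θ2 :=
      (((((((hG2 0 A1).const_mul (μ1*μ2)).add (hasDerivAt_const _ _)).add
        (hasDerivAt_const _ _)).add ((hG1 π A4).const_mul (μ2*(-μ1)))).add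
        (((hG1 (θ2+π) A5).const_mul (μ2*(-μ2))))).add (hasDerivAt_const _ _)).neg
    have h0 : (![0,θ2,π,θ2+π] : Fin 4 → ℝ) 1 = θ2 := rfl
    rw [partialV, F1eq, h0]
    exact H.deriv
  have p2 : partialV ![μ1,μ2,-μ1,-μ2] ![0,θ2,π,θ2+π] 2 =
      -(0 + μ1*(-μ1) * (-fD (0 - π)) + 0 + μ2*(-μ1) * (-fD (θ2 - π)) + 0 + (-μ1)*(-μ2) * fD (π - (θ2+π))) := by
    have H : HasDerivAt (fun t => -(μ1*μ2 * G (0 - θ2) + μ1*(-μ1) * G (0 - t) + μ1*(-μ2) * G (0 - (θ2+π))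
        + μ2*(-μ1) * G (θ2 - t) + μ2*(-μ2) * G (θ2 - (θ2+π)) + (-μ1)*(-μ2) * G (t - (θ2+π))))
        (-(0 + μ1*(-μ1) * (-fD (0 - π)) + 0 + μ2*(-μ1) * (-fD (θ2 - π)) + 0 + (-μ1)*(-μ2) * fD (π - (θ2+π)))) π :=
      ((((((hasDerivAt_const _ _).add ((hG2 0 A2).const_mul (μ1*(-μ1)))).add
        (hasDerivAt_const _ _)).add ((hG2 θ2 A4).const_mul (μ2*(-μ1)))).add
        (hasDerivAt_const _ _)).add (((hG1 (θ2+π) A6).const_mul ((-μ1)*(-μ2))))).neg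
    have h0 : (![0,θ2,π,θ2+π] : Fin 4 → ℝ) 2 = π := rfl
    rw [partialV, F2eq, h0]
    exact H.deriv
  have p3 : partialV ![μ1,μ2,-μ1,-μ2] ![0,θ2,π,θ2+π] 3 =
      -(0 + 0 + μ1*(-μ2) * (-fD (0 - (θ2+π))) + 0 + μ2*(-μ2) * (-fD (θ2 - (θ2+π))) + (-μ1)*(-μ2) * (-fD (π - (θ2+π)))) := by
    have H : HasDerivAt (fun t => -(μ1*μ2 * G (0 - θ2) + μ1*(-μ1) * G (0 - π) + μ1*(-μ2) * G (0 - t)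
        + μ2*(-μ1) * G (θ2 - π) + μ2*(-μ2) * G (θ2 - t) + (-μ1)*(-μ2) * G (π - t)))
        (-(0 + 0 + μ1*(-μ2) * (-fD (0 - (θ2+π))) + 0 + μ2*(-μ2) * (-fD (θ2 - (θ2+π))) + (-μ1)*(-μ2) * (-fD (π - (θ2+π))))) (θ2+π) :=
      ((((((hasDerivAt_const _ _).add (hasDerivAt_const _ _)).add
        ((hG2 0 A3).const_mul (μ1*(-μ2)))).add (hasDerivAt_const _ _)).add
        ((hG2 θ2 A5).const_mul (μ2*(-μ2)))).add (((hG2 π A6).const_mul ((-μ1)*(-μ2))))).neg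
    have h0 : (![0,θ2,π,θ2+π] : Fin 4 → ℝ) 3 = θ2 + π := rfl
    rw [partialV, F3eq, h0]
    exact H.deriv
  have hd1 : (2:ℝ) - 2 * Real.cos θ2 ≠ 0 := fun h => hc1 (by linarith)
  have hd2 : (2:ℝ) + 2 * Real.cos θ2 ≠ 0 := fun h => hcm1 (by linarith)
  have hpy := Real.sin_sq_add_cos_sq θ2
  have hsin2 : Real.sin θ2 ^ 2 = 1 - Real.cos θ2 ^ 2 := by linarith
  have hd3 : (1:ℝ) + Real.cos θ2 ≠ 0 := fun h => hcm1 (by linarith)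
  have hd4 : (1:ℝ) - Real.cos θ2 ≠ 0 := fun h => hc1 (by linarith)
  -- key values
  have v0 : Real.sin θ2 * (-(μ1*μ2 * fD (0 - θ2) + μ1*(-μ1) * fD (0 - π) + μ1*(-μ2) * fD (0 - (θ2+π)) + 0 + 0 + 0))
      = μ1*μ2 * (1 - 2 * Real.sin θ2^2) := by
    simp only [fD, zero_sub, Real.sin_neg, Real.cos_neg, Real.sin_pi, Real.cos_pi,
      Real.sin_add, Real.cos_add]
    ring_nf
    rw [hsin2]
    field_simp
    ring
  have v1 : Real.sin θ2 * (-(μ1*μ2 * (-fD (0 - θ2)) + 0 + 0 + μ2*(-μ1) * fD (θ2 - π) + μ2*(-μ2) * fD (θ2 - (θ2+π)) + 0))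
      = -(μ1*μ2 * (1 - 2 * Real.sin θ2^2)) := by
    simp only [fD, zero_sub, Real.sin_neg, Real.cos_neg, Real.sin_pi, Real.cos_pi,
      Real.sin_add, Real.cos_add, Real.sin_sub, Real.cos_sub]
    ring_nf
    rw [hsin2]
    field_simp
    ring
  have v2 : Real.sin θ2 * (-(0 + μ1*(-μ1) * (-fD (0 - π)) + 0 + μ2*(-μ1) * (-fD (θ2 - π)) + 0 + (-μ1)*(-μ2) * fD (π - (θ2+π))))
      = μ1*μ2 * (1 - 2 * Real.sin θ2^2) := by
    simp only [fD, zero_sub, Real.sin_neg, Real.cos_neg, Real.sin_pi, Real.cos_pi,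
      Real.sin_add, Real.cos_add, Real.sin_sub, Real.cos_sub]
    ring_nf
    rw [hsin2]
    field_simp
    ring
  have v3 : Real.sin θ2 * (-(0 + 0 + μ1*(-μ2) * (-fD (0 - (θ2+π))) + 0 + μ2*(-μ2) * (-fD (θ2 - (θ2+π))) + (-μ1)*(-μ2) * (-fD (π - (θ2+π)))))
      = -(μ1*μ2 * (1 - 2 * Real.sin θ2^2)) := by
    simp only [fD, zero_sub, Real.sin_neg, Real.cos_neg, Real.sin_pi, Real.cos_pi,
      Real.sin_add, Real.cos_add, Real.sin_sub, Real.cos_sub]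
    ring_nf
    rw [hsin2]
    field_simp
    ring
  -- criticality is equivalent to 1 - 2 sin² θ2 = 0
  have crit_iff : IsCriticalPt ![μ1, μ2, -μ1, -μ2] ![0, θ2, π, θ2 + π] ↔
      1 - 2 * Real.sin θ2^2 = 0 := by
    constructor
    · intro h
      have h0 := h 0
      rw [p0] at h0
      rw [h0, mul_zero] at v0
      have := (mul_eq_zero.mp v0.symm).resolve_left (mul_ne_zero h1 h2)
      linarith
    · intro he
      have hz : μ1*μ2 * (1 - 2*Real.sin θ2^2) = 0 := by rw [he]; ring
      have q0 : partialV ![μ1,μ2,-μ1,-μ2] ![0,θ2,π,θ2+π] 0 = 0 := by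
        rw [p0]; rw [hz] at v0
        exact (mul_eq_zero.mp v0).resolve_left hs
      have q1 : partialV ![μ1,μ2,-μ1,-μ2] ![0,θ2,π,θ2+π] 1 = 0 := by
        rw [p1]; rw [hz, neg_zero] at v1
        exact (mul_eq_zero.mp v1).resolve_left hs
      have q2 : partialV ![μ1,μ2,-μ1,-μ2] ![0,θ2,π,θ2+π] 2 = 0 := by
        rw [p2]; rw [hz] at v2
        exact (mul_eq_zero.mp v2).resolve_left hs
      have q3 : partialV ![μ1,μ2,-μ1,-μ2] ![0,θ2,π,θ2+π] 3 = 0 := by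
        rw [p3]; rw [hz, neg_zero] at v3
        exact (mul_eq_zero.mp v3).resolve_left hs
      intro k
      fin_cases k
      exacts [q0, q1, q2, q3]
  rw [crit_iff]
  simp only [Set.mem_insert_iff, Set.mem_singleton_iff]
  constructor
  · intro he
    have hcos : Real.cos (2 * θ2) = 0 := by
      rw [Real.cos_two_mul']
      nlinarith
    obtain ⟨n, hn⟩ := Real.cos_eq_zero_iff.mp hcos
    have hb1 : (0:ℝ) < 2*(n:ℝ)+1 := by
      by_contra hcc
      push_neg at hcc
      nlinarith
    have hb2 : (2*(n:ℝ)+1) < 8 := by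
      by_contra hcc
      push_neg at hcc
      nlinarith
    have hb1' : (0:ℤ) < 2*n+1 := by exact_mod_cast hb1
    have hb2' : (2*n+1 : ℤ) < 8 := by exact_mod_cast hb2
    have hn' : n = 0 ∨ n = 1 ∨ n = 2 ∨ n = 3 := by omega
    rcases hn' with h | h | h | h <;> subst h <;> push_cast at hn
    · left; linarith
    · right; left; linarith
    · right; right; left; linarith
    · right; right; right; linarith
  · intro he
    have hcos : Real.cos (2 * θ2) = 0 := by
      rcases he with h | h | h | h <;> subst h <;> apply Real.cos_eq_zero_iff.mpr
      · exact ⟨0, by push_cast; ring⟩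
      · exact ⟨1, by push_cast; ring⟩
      · exact ⟨2, by push_cast; ring⟩
      · exact ⟨3, by push_cast; ring⟩
    rw [Real.cos_two_mul'] at hcos
    nlinarith
end

section
/- Let μ1, μ2, μ3, μ4 be nonzero real numbers and let θ2 ∈ ℝ be such that the four angles 0, θ2, 2θ2, 3θ2 are pairwise distinct modulo 2π. If (0, θ2, 2θ2, 3θ2) is a critical point of V, then μ1² − μ1 μ3 + μ2 μ4 − μ4² = 0. -/
open Real Polynomial

noncomputable def VortexH (x : ℝ) : ℝ := Real.cos x + (1/2) * Real.log (2 - 2 * Real.cos x)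
noncomputable def VortexG (x : ℝ) : ℝ := Real.sin x * (1 - 1/(2 - 2*Real.cos x))

lemma VortexG_neg (x : ℝ) : VortexG (-x) = -VortexG x := by simp [VortexG, neg_mul]

lemma hasDerivAt_VortexH (x : ℝ) (hx : Real.cos x ≠ 1) :
    HasDerivAt VortexH (-(VortexG x)) x := by
  have h2 : (2 : ℝ) - 2 * Real.cos x ≠ 0 := by intro h; apply hx; linarith
  have hu : HasDerivAt (fun y => 2 - 2 * Real.cos y) (2 * Real.sin x) x := by
    have := ((Real.hasDerivAt_cos x).const_mul (2:ℝ)).const_sub (2:ℝ)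
    refine this.congr_deriv ?_; ring
  have hlog := hu.log h2
  have := (Real.hasDerivAt_cos x).add (hlog.const_mul ((1:ℝ)/2))
  refine this.congr_deriv ?_
  rw [VortexG]; field_simp
  ring

lemma Veval (μ θ : Fin 4 → ℝ) : V μ θ =
    -(μ 0 * μ 1 * VortexH (θ 0 - θ 1) + μ 0 * μ 2 * VortexH (θ 0 - θ 2)
      + μ 0 * μ 3 * VortexH (θ 0 - θ 3) + μ 1 * μ 2 * VortexH (θ 1 - θ 2)
      + μ 1 * μ 3 * VortexH (θ 1 - θ 3) + μ 2 * μ 3 * VortexH (θ 2 - θ 3)) := by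
  have e0 : Finset.Ioi (0 : Fin 4) = {1,2,3} := by decide
  have e1 : Finset.Ioi (1 : Fin 4) = {2,3} := by decide
  have e2 : Finset.Ioi (2 : Fin 4) = {3} := by decide
  have e3 : Finset.Ioi (3 : Fin 4) = ∅ := by decide
  simp [V, VortexH, Fin.sum_univ_four, e0, e1, e2, e3, Finset.sum_insert, Finset.sum_pair]
  ring

/-- Equally spaced configurations: the first Groebner basis relation
`mu1^2 - mu1*mu3 + mu2*mu4 - mu4^2 = 0` must hold. -/
theorem trapezoid_f1 (μ1 μ2 μ3 μ4 θ2 : ℝ)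
    (h1 : μ1 ≠ 0) (h2 : μ2 ≠ 0) (h3 : μ3 ≠ 0) (h4 : μ4 ≠ 0)
    (hdist : ∀ i j : Fin 4, i ≠ j → ∀ n : ℤ,
      (![0, θ2, 2 * θ2, 3 * θ2] : Fin 4 → ℝ) i -
        (![0, θ2, 2 * θ2, 3 * θ2] : Fin 4 → ℝ) j ≠ 2 * π * n)
    (hcrit : IsCriticalPt ![μ1, μ2, μ3, μ4] ![0, θ2, 2 * θ2, 3 * θ2]) :
    μ1 ^ 2 - μ1 * μ3 + μ2 * μ4 - μ4 ^ 2 = 0 := by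
  set μv : Fin 4 → ℝ := ![μ1, μ2, μ3, μ4] with hμv
  set θv : Fin 4 → ℝ := ![0, θ2, 2 * θ2, 3 * θ2] with hθv
  -- cosine conditions
  have hcos1 : Real.cos θ2 ≠ 1 := by
    intro hc
    rw [Real.cos_eq_one_iff] at hc
    obtain ⟨n, hn⟩ := hc
    exact hdist 1 0 (by decide) n (by
      simp only [hθv, Matrix.cons_val_one, Matrix.head_cons, Matrix.cons_val_zero]
      linarith)
  have hcos2 : Real.cos (2 * θ2) ≠ 1 := by
    intro hc
    rw [Real.cos_eq_one_iff] at hc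
    obtain ⟨n, hn⟩ := hc
    exact hdist 2 0 (by decide) n (by
      simp only [hθv, Matrix.cons_val_two, Matrix.tail_cons, Matrix.head_cons,
        Matrix.cons_val_zero]
      linarith)
  have hc1' : Real.cos (-θ2) ≠ 1 := by rwa [Real.cos_neg]
  have hc2' : Real.cos (-(2*θ2)) ≠ 1 := by rwa [Real.cos_neg]
  -- derivative for k = 1
  have hfun1 : (fun t => V μv (Function.update θv 1 t)) =
      fun t => -(μ1 * μ2 * VortexH (0 - t) + μ1 * μ3 * VortexH (0 - 2*θ2)
        + μ1 * μ4 * VortexH (0 - 3*θ2) + μ2 * μ3 * VortexH (t - 2*θ2)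
        + μ2 * μ4 * VortexH (t - 3*θ2) + μ3 * μ4 * VortexH (2*θ2 - 3*θ2)) := by
    funext t
    rw [Veval]
    simp [hμv, hθv, Function.update_apply]
  have d11 : HasDerivAt (fun t => VortexH (0 - t)) (-(VortexG (0 - θ2)) * (0 - 1)) θ2 :=
    (hasDerivAt_VortexH _ (by simpa using hc1')).comp θ2
      ((hasDerivAt_const θ2 (0:ℝ)).sub (hasDerivAt_id θ2))
  have d12 : HasDerivAt (fun t => VortexH (t - 2*θ2)) (-(VortexG (θ2 - 2*θ2)) * 1) θ2 :=
    (hasDerivAt_VortexH _ (by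
      have : θ2 - 2*θ2 = -θ2 := by ring
      rw [this]; exact hc1')).comp θ2 ((hasDerivAt_id θ2).sub_const _)
  have d13 : HasDerivAt (fun t => VortexH (t - 3*θ2)) (-(VortexG (θ2 - 3*θ2)) * 1) θ2 :=
    (hasDerivAt_VortexH _ (by
      have : θ2 - 3*θ2 = -(2*θ2) := by ring
      rw [this]; exact hc2')).comp θ2 ((hasDerivAt_id θ2).sub_const _)
  have hF1 : HasDerivAt (fun t => V μv (Function.update θv 1 t))
      (μ2 * ((μ1 - μ3) * VortexG θ2 - μ4 * VortexG (2*θ2))) θ2 := by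
    rw [hfun1]
    have := ((((((d11.const_mul (μ1*μ2)).add
      (hasDerivAt_const θ2 (μ1*μ3 * VortexH (0 - 2*θ2)))).add
      (hasDerivAt_const θ2 (μ1*μ4 * VortexH (0 - 3*θ2)))).add
      (d12.const_mul (μ2*μ3))).add
      (d13.const_mul (μ2*μ4))).add
      (hasDerivAt_const θ2 (μ3*μ4 * VortexH (2*θ2 - 3*θ2)))).neg
    refine this.congr_deriv ?_
    have e1 : (0:ℝ) - θ2 = -θ2 := by ring
    have e2 : θ2 - 2*θ2 = -θ2 := by ring
    have e3 : θ2 - 3*θ2 = -(2*θ2) := by ring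
    rw [e1, e2, e3, VortexG_neg, VortexG_neg]
    ring
  have hE2 : (μ1 - μ3) * VortexG θ2 - μ4 * VortexG (2*θ2) = 0 := by
    have hcrit1 := hcrit 1
    unfold partialV at hcrit1
    have hpt : θv 1 = θ2 := by simp [hθv]
    rw [hpt, hF1.deriv] at hcrit1
    exact (mul_eq_zero.1 hcrit1).resolve_left h2
  -- derivative for k = 2
  have hfun2 : (fun t => V μv (Function.update θv 2 t)) =
      fun t => -(μ1 * μ2 * VortexH (0 - θ2) + μ1 * μ3 * VortexH (0 - t)
        + μ1 * μ4 * VortexH (0 - 3*θ2) + μ2 * μ3 * VortexH (θ2 - t)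
        + μ2 * μ4 * VortexH (θ2 - 3*θ2) + μ3 * μ4 * VortexH (t - 3*θ2)) := by
    funext t
    rw [Veval]
    simp [hμv, hθv, Function.update_apply]
  have d21 : HasDerivAt (fun t => VortexH (0 - t)) (-(VortexG (0 - 2*θ2)) * (0 - 1)) (2*θ2) :=
    (hasDerivAt_VortexH _ (by simpa using hc2')).comp (2*θ2)
      ((hasDerivAt_const (2*θ2) (0:ℝ)).sub (hasDerivAt_id (2*θ2)))
  have d22 : HasDerivAt (fun t => VortexH (θ2 - t)) (-(VortexG (θ2 - 2*θ2)) * (0 - 1)) (2*θ2) :=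
    (hasDerivAt_VortexH _ (by
      have : θ2 - 2*θ2 = -θ2 := by ring
      rw [this]; exact hc1')).comp (2*θ2)
      ((hasDerivAt_const (2*θ2) θ2).sub (hasDerivAt_id (2*θ2)))
  have d23 : HasDerivAt (fun t => VortexH (t - 3*θ2)) (-(VortexG (2*θ2 - 3*θ2)) * 1) (2*θ2) :=
    (hasDerivAt_VortexH _ (by
      have : 2*θ2 - 3*θ2 = -θ2 := by ring
      rw [this]; exact hc1')).comp (2*θ2) ((hasDerivAt_id (2*θ2)).sub_const _)
  have hF2 : HasDerivAt (fun t => V μv (Function.update θv 2 t))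
      (μ3 * (μ1 * VortexG (2*θ2) + (μ2 - μ4) * VortexG θ2)) (2*θ2) := by
    rw [hfun2]
    have := ((((((hasDerivAt_const (2*θ2) (μ1*μ2 * VortexH (0 - θ2))).add
      (d21.const_mul (μ1*μ3))).add
      (hasDerivAt_const (2*θ2) (μ1*μ4 * VortexH (0 - 3*θ2)))).add
      (d22.const_mul (μ2*μ3))).add
      (hasDerivAt_const (2*θ2) (μ2*μ4 * VortexH (θ2 - 3*θ2)))).add
      (d23.const_mul (μ3*μ4))).neg
    refine this.congr_deriv ?_
    have e1 : (0:ℝ) - 2*θ2 = -(2*θ2) := by ring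
    have e2 : θ2 - 2*θ2 = -θ2 := by ring
    have e3 : 2*θ2 - 3*θ2 = -θ2 := by ring
    rw [e1, e2, e3, VortexG_neg, VortexG_neg]
    ring
  have hE3 : μ1 * VortexG (2*θ2) + (μ2 - μ4) * VortexG θ2 = 0 := by
    have hcrit2 := hcrit 2
    unfold partialV at hcrit2
    have hpt : θv 2 = 2*θ2 := by simp [hθv]
    rw [hpt, hF2.deriv] at hcrit2
    exact (mul_eq_zero.1 hcrit2).resolve_left h3
  -- final algebra
  set a1 := VortexG θ2 with ha1
  set a2 := VortexG (2*θ2) with ha2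
  by_cases hA : a1 = 0
  · -- then a2 = 0, contradiction
    exfalso
    have ha2z : a2 = 0 := by
      have : μ4 * a2 = 0 := by rw [hA] at hE2; linarith
      exact (mul_eq_zero.1 this).resolve_left h4
    have hcm1 : Real.cos θ2 ≠ -1 := by
      intro hm; apply hcos2; rw [Real.cos_two_mul, hm]; norm_num
    have hs : Real.sin θ2 ≠ 0 := by
      intro hs
      have hsq := Real.sin_sq_add_cos_sq θ2
      have hz : (Real.cos θ2 - 1) * (Real.cos θ2 + 1) = 0 := by nlinarith
      rcases mul_eq_zero.1 hz with hh | hh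
      · exact hcos1 (by linarith)
      · exact hcm1 (by linarith)
    have hd1 : (2:ℝ) - 2 * Real.cos θ2 ≠ 0 := by
      intro hh; exact hcos1 (by linarith)
    have hchalf : Real.cos θ2 = 1/2 := by
      rw [ha1, VortexG] at hA
      rcases mul_eq_zero.1 hA with hh | hh
      · exact absurd hh hs
      · field_simp at hh; linarith
    have hc2m : Real.cos (2*θ2) = -(1/2) := by
      rw [Real.cos_two_mul, hchalf]; norm_num
    have hs2 : Real.sin (2*θ2) = Real.sin θ2 := by
      rw [Real.sin_two_mul, hchalf]; ring
    rw [ha2, VortexG, hc2m, hs2] at ha2z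
    apply hs
    have : (1:ℝ) - 1/(2 - 2 * -(1/2)) = 2/3 := by norm_num
    rw [this] at ha2z
    linarith [mul_eq_zero.1 ha2z]

  · have key : (μ1 ^ 2 - μ1 * μ3 + μ2 * μ4 - μ4 ^ 2) * a1 = 0 := by
      linear_combination μ1 * hE2 + μ4 * hE3
    exact (mul_eq_zero.1 key).resolve_right hA
end

section
/- Let μ1, μ2, μ3, μ4 be nonzero real numbers and let θ2 ∈ ℝ be such that the four angles 0, θ2, 2θ2, 3θ2 are pairwise distinct modulo 2π. If (0, θ2, 2θ2, 3θ2) is a critical point of V, then (μ2 − μ4)·p1(μ2, μ3, μ4) = 0, where p1(μ2, μ3, μ4) = 4μ2⁵ + 2μ2³μ3² + 10μ2²μ3³ − 22μ2μ3⁴ + 8μ3⁵ − 24μ2⁴μ4 − 30μ2³μ3μ4 + 82μ2²μ3²μ4 − 60μ2μ3³μ4 + 22μ3⁴μ4 + 13μ2³μ4² + 135μ2²μ3μ4² − 181μ2μ3²μ4² + 54μ3³μ4² + 112μ2²μ4³ − 247μ2μ3μ4³ + 117μ3²μ4³ − 106μ2μ4⁴ + 98μ3μ4⁴ + 17μ4⁵.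 -/
open Real Polynomial

noncomputable def gaux (d : ℝ) : ℝ := Real.cos d + (1/2) * Real.log (2 - 2 * Real.cos d)
noncomputable def saux (d : ℝ) : ℝ := Real.sin d - Real.sin d / (2 - 2 * Real.cos d)

lemma saux_neg (d : ℝ) : saux (-d) = - saux d := by unfold saux; simp; ring

lemma saux_eq (d : ℝ) (h : Real.cos d ≠ 1) :
    saux d = Real.sin d * (1 - 2 * Real.cos d) / (2 - 2 * Real.cos d) := by
  have hne : 2 - 2 * Real.cos d ≠ 0 := by intro hc; apply h; linarith [(sub_eq_zero.mp hc)]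
  unfold saux; field_simp; ring

lemma Vexp (μ θ : Fin 4 → ℝ) : V μ θ =
    -(μ 0 * μ 1 * gaux (θ 0 - θ 1) + μ 0 * μ 2 * gaux (θ 0 - θ 2) + μ 0 * μ 3 * gaux (θ 0 - θ 3)
      + μ 1 * μ 2 * gaux (θ 1 - θ 2) + μ 1 * μ 3 * gaux (θ 1 - θ 3) + μ 2 * μ 3 * gaux (θ 2 - θ 3)) := by
  unfold V gaux
  rw [Fin.sum_univ_four]
  rw [show Finset.Ioi (0:Fin 4) = {1,2,3} by decide,
      show Finset.Ioi (1:Fin 4) = {2,3} by decide,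
      show Finset.Ioi (2:Fin 4) = {3} by decide,
      show Finset.Ioi (3:Fin 4) = ∅ by decide]
  simp [Finset.sum_insert, Finset.mem_insert]
  ring

lemma hgaux (d₀ : ℝ) (h : Real.cos d₀ ≠ 1) : HasDerivAt gaux (-saux d₀) d₀ := by
  have hne : 2 - 2 * Real.cos d₀ ≠ 0 := by
    intro hc; apply h; linarith [(sub_eq_zero.mp hc)]
  have h1 : HasDerivAt (fun d => 2 - 2 * Real.cos d) (2 * Real.sin d₀) d₀ := by
    simpa using ((Real.hasDerivAt_cos d₀).const_mul 2).const_sub 2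
  have h2 := (h1.log hne).const_mul (1/2)
  have h3 := (Real.hasDerivAt_cos d₀).add h2
  refine h3.congr_deriv ?_
  unfold saux; field_simp; ring

lemma hds (a c A : ℝ) (h : Real.cos (a - c) ≠ 1) :
    HasDerivAt (fun t => A * gaux (t - c)) (A * (-saux (a - c))) a := by
  have := (hgaux (a-c) h).comp a ((hasDerivAt_id a).sub_const c)
  simpa using (this.const_mul A)

lemma hds' (a c A : ℝ) (h : Real.cos (c - a) ≠ 1) :
    HasDerivAt (fun t => A * gaux (c - t)) (A * saux (c - a)) a := by
  have := (hgaux (c-a) h).comp a ((hasDerivAt_id a).const_sub c)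
  have h2 := this.const_mul A
  refine h2.congr_deriv ?_
  ring

lemma cos_sub_comm' (a b : ℝ) : Real.cos (a - b) = Real.cos (b - a) := by
  rw [← Real.cos_neg]; ring_nf

lemma pV0 (μ θ : Fin 4 → ℝ) (d1 : Real.cos (θ 0 - θ 1) ≠ 1) (d2 : Real.cos (θ 0 - θ 2) ≠ 1)
    (d3 : Real.cos (θ 0 - θ 3) ≠ 1) :
    partialV μ θ 0 =
      μ 0 * (μ 1 * saux (θ 0 - θ 1) + μ 2 * saux (θ 0 - θ 2) + μ 3 * saux (θ 0 - θ 3)) := by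
  unfold partialV
  have hfe : (fun t => V μ (Function.update θ 0 t)) = fun t =>
      -(μ 0 * μ 1 * gaux (t - θ 1) + μ 0 * μ 2 * gaux (t - θ 2) + μ 0 * μ 3 * gaux (t - θ 3)
        + (μ 1 * μ 2 * gaux (θ 1 - θ 2) + μ 1 * μ 3 * gaux (θ 1 - θ 3) + μ 2 * μ 3 * gaux (θ 2 - θ 3))) := by
    funext t; rw [Vexp]; simp [Function.update]; ring
  rw [hfe]
  have H := ((((hds (θ 0) (θ 1) (μ 0 * μ 1) d1).add (hds (θ 0) (θ 2) (μ 0 * μ 2) d2)).add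
      (hds (θ 0) (θ 3) (μ 0 * μ 3) d3)).add_const
      (μ 1 * μ 2 * gaux (θ 1 - θ 2) + μ 1 * μ 3 * gaux (θ 1 - θ 3) + μ 2 * μ 3 * gaux (θ 2 - θ 3))).neg
  refine H.deriv.trans ?_; ring

lemma pV1 (μ θ : Fin 4 → ℝ) (d1 : Real.cos (θ 1 - θ 0) ≠ 1) (d2 : Real.cos (θ 1 - θ 2) ≠ 1)
    (d3 : Real.cos (θ 1 - θ 3) ≠ 1) :
    partialV μ θ 1 =
      μ 1 * (μ 0 * saux (θ 1 - θ 0) + μ 2 * saux (θ 1 - θ 2) + μ 3 * saux (θ 1 - θ 3)) := by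
  unfold partialV
  have hfe : (fun t => V μ (Function.update θ 1 t)) = fun t =>
      -(μ 0 * μ 1 * gaux (θ 0 - t) + μ 1 * μ 2 * gaux (t - θ 2) + μ 1 * μ 3 * gaux (t - θ 3)
        + (μ 0 * μ 2 * gaux (θ 0 - θ 2) + μ 0 * μ 3 * gaux (θ 0 - θ 3) + μ 2 * μ 3 * gaux (θ 2 - θ 3))) := by
    funext t; rw [Vexp]; simp [Function.update]; ring
  rw [hfe]
  have d1' : Real.cos (θ 0 - θ 1) ≠ 1 := by rw [cos_sub_comm']; exact d1
  have H := ((((hds' (θ 1) (θ 0) (μ 0 * μ 1) d1').add (hds (θ 1) (θ 2) (μ 1 * μ 2) d2)).add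
      (hds (θ 1) (θ 3) (μ 1 * μ 3) d3)).add_const
      (μ 0 * μ 2 * gaux (θ 0 - θ 2) + μ 0 * μ 3 * gaux (θ 0 - θ 3) + μ 2 * μ 3 * gaux (θ 2 - θ 3))).neg
  refine H.deriv.trans ?_
  rw [show θ 0 - θ 1 = -(θ 1 - θ 0) by ring, saux_neg]
  ring

lemma pV2 (μ θ : Fin 4 → ℝ) (d1 : Real.cos (θ 2 - θ 0) ≠ 1) (d2 : Real.cos (θ 2 - θ 1) ≠ 1)
    (d3 : Real.cos (θ 2 - θ 3) ≠ 1) :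
    partialV μ θ 2 =
      μ 2 * (μ 0 * saux (θ 2 - θ 0) + μ 1 * saux (θ 2 - θ 1) + μ 3 * saux (θ 2 - θ 3)) := by
  unfold partialV
  have hfe : (fun t => V μ (Function.update θ 2 t)) = fun t =>
      -(μ 0 * μ 2 * gaux (θ 0 - t) + μ 1 * μ 2 * gaux (θ 1 - t) + μ 2 * μ 3 * gaux (t - θ 3)
        + (μ 0 * μ 1 * gaux (θ 0 - θ 1) + μ 0 * μ 3 * gaux (θ 0 - θ 3) + μ 1 * μ 3 * gaux (θ 1 - θ 3))) := by
    funext t; rw [Vexp]; simp [Function.update]; ring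
  rw [hfe]
  have d1' : Real.cos (θ 0 - θ 2) ≠ 1 := by rw [cos_sub_comm']; exact d1
  have d2' : Real.cos (θ 1 - θ 2) ≠ 1 := by rw [cos_sub_comm']; exact d2
  have H := ((((hds' (θ 2) (θ 0) (μ 0 * μ 2) d1').add (hds' (θ 2) (θ 1) (μ 1 * μ 2) d2')).add
      (hds (θ 2) (θ 3) (μ 2 * μ 3) d3)).add_const
      (μ 0 * μ 1 * gaux (θ 0 - θ 1) + μ 0 * μ 3 * gaux (θ 0 - θ 3) + μ 1 * μ 3 * gaux (θ 1 - θ 3))).neg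
  refine H.deriv.trans ?_
  rw [show θ 0 - θ 2 = -(θ 2 - θ 0) by ring, show θ 1 - θ 2 = -(θ 2 - θ 1) by ring]
  simp only [saux_neg]
  ring

lemma pV3 (μ θ : Fin 4 → ℝ) (d1 : Real.cos (θ 3 - θ 0) ≠ 1) (d2 : Real.cos (θ 3 - θ 1) ≠ 1)
    (d3 : Real.cos (θ 3 - θ 2) ≠ 1) :
    partialV μ θ 3 =
      μ 3 * (μ 0 * saux (θ 3 - θ 0) + μ 1 * saux (θ 3 - θ 1) + μ 2 * saux (θ 3 - θ 2)) := by
  unfold partialV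
  have hfe : (fun t => V μ (Function.update θ 3 t)) = fun t =>
      -(μ 0 * μ 3 * gaux (θ 0 - t) + μ 1 * μ 3 * gaux (θ 1 - t) + μ 2 * μ 3 * gaux (θ 2 - t)
        + (μ 0 * μ 1 * gaux (θ 0 - θ 1) + μ 0 * μ 2 * gaux (θ 0 - θ 2) + μ 1 * μ 2 * gaux (θ 1 - θ 2))) := by
    funext t; rw [Vexp]; simp [Function.update]; ring
  rw [hfe]
  have d1' : Real.cos (θ 0 - θ 3) ≠ 1 := by rw [cos_sub_comm']; exact d1
  have d2' : Real.cos (θ 1 - θ 3) ≠ 1 := by rw [cos_sub_comm']; exact d2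
  have d3' : Real.cos (θ 2 - θ 3) ≠ 1 := by rw [cos_sub_comm']; exact d3
  have H := ((((hds' (θ 3) (θ 0) (μ 0 * μ 3) d1').add (hds' (θ 3) (θ 1) (μ 1 * μ 3) d2')).add
      (hds' (θ 3) (θ 2) (μ 2 * μ 3) d3')).add_const
      (μ 0 * μ 1 * gaux (θ 0 - θ 1) + μ 0 * μ 2 * gaux (θ 0 - θ 2) + μ 1 * μ 2 * gaux (θ 1 - θ 2))).neg
  refine H.deriv.trans ?_
  rw [show θ 0 - θ 3 = -(θ 3 - θ 0) by ring, show θ 1 - θ 3 = -(θ 3 - θ 1) by ring,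
      show θ 2 - θ 3 = -(θ 3 - θ 2) by ring]
  simp only [saux_neg]
  ring

set_option maxHeartbeats 2000000 in
/-- Equally spaced configurations: the relation `(mu2 - mu4) * p1 = 0` must
hold, where `p1` is the quintic factor of `f6`. -/
theorem trapezoid_f6 (μ1 μ2 μ3 μ4 θ2 : ℝ)
    (h1 : μ1 ≠ 0) (h2 : μ2 ≠ 0) (h3 : μ3 ≠ 0) (h4 : μ4 ≠ 0)
    (hdist : ∀ i j : Fin 4, i ≠ j → ∀ n : ℤ,
      (![0, θ2, 2 * θ2, 3 * θ2] : Fin 4 → ℝ) i -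
        (![0, θ2, 2 * θ2, 3 * θ2] : Fin 4 → ℝ) j ≠ 2 * π * n)
    (hcrit : IsCriticalPt ![μ1, μ2, μ3, μ4] ![0, θ2, 2 * θ2, 3 * θ2]) :
    (μ2 - μ4) *
      (4 * μ2 ^ 5 + 2 * μ2 ^ 3 * μ3 ^ 2 + 10 * μ2 ^ 2 * μ3 ^ 3 - 22 * μ2 * μ3 ^ 4 +
        8 * μ3 ^ 5 - 24 * μ2 ^ 4 * μ4 - 30 * μ2 ^ 3 * μ3 * μ4 +
        82 * μ2 ^ 2 * μ3 ^ 2 * μ4 - 60 * μ2 * μ3 ^ 3 * μ4 + 22 * μ3 ^ 4 * μ4 +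
        13 * μ2 ^ 3 * μ4 ^ 2 + 135 * μ2 ^ 2 * μ3 * μ4 ^ 2 -
        181 * μ2 * μ3 ^ 2 * μ4 ^ 2 + 54 * μ3 ^ 3 * μ4 ^ 2 + 112 * μ2 ^ 2 * μ4 ^ 3 -
        247 * μ2 * μ3 * μ4 ^ 3 + 117 * μ3 ^ 2 * μ4 ^ 3 - 106 * μ2 * μ4 ^ 4 +
        98 * μ3 * μ4 ^ 4 + 17 * μ4 ^ 5) = 0 := by
  have hc1 : Real.cos θ2 ≠ 1 := by
    intro h
    obtain ⟨n, hn⟩ := (Real.cos_eq_one_iff _).mp h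
    refine hdist 1 0 (by decide) n ?_
    simp only [Matrix.cons_val_zero, Matrix.cons_val_one, Matrix.cons_val_two, Matrix.cons_val_three, Matrix.tail_cons, Matrix.head_cons]
    linear_combination -hn
  have hc2 : Real.cos (2*θ2) ≠ 1 := by
    intro h
    obtain ⟨n, hn⟩ := (Real.cos_eq_one_iff _).mp h
    refine hdist 2 0 (by decide) n ?_
    simp only [Matrix.cons_val_zero, Matrix.cons_val_one, Matrix.cons_val_two, Matrix.cons_val_three, Matrix.tail_cons, Matrix.head_cons]
    linear_combination -hn
  have hc3 : Real.cos (3*θ2) ≠ 1 := by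
    intro h
    obtain ⟨n, hn⟩ := (Real.cos_eq_one_iff _).mp h
    refine hdist 3 0 (by decide) n ?_
    simp only [Matrix.cons_val_zero, Matrix.cons_val_one, Matrix.cons_val_two, Matrix.cons_val_three, Matrix.tail_cons, Matrix.head_cons]
    linear_combination -hn
  have hcn1 : ∀ d:ℝ, Real.cos d ≠ 1 → Real.cos (-d) ≠ 1 := fun d h => by rwa [Real.cos_neg]
  -- equations from criticality
  have vnot : ∀ i : Fin 4, (![(0:ℝ), θ2, 2 * θ2, 3 * θ2]) i = ![(0:ℝ), θ2, 2*θ2, 3*θ2] i := fun i => rfl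
  have d01 : Real.cos ((![(0:ℝ), θ2, 2 * θ2, 3 * θ2]) 0 - (![(0:ℝ), θ2, 2 * θ2, 3 * θ2]) 1) ≠ 1 := by
    simp only [Matrix.cons_val_zero, Matrix.cons_val_one, Matrix.head_cons]
    rw [show (0:ℝ) - θ2 = -θ2 by ring]; exact hcn1 _ hc1
  have d02 : Real.cos ((![(0:ℝ), θ2, 2 * θ2, 3 * θ2]) 0 - (![(0:ℝ), θ2, 2 * θ2, 3 * θ2]) 2) ≠ 1 := by
    simp only [Matrix.cons_val_zero, Matrix.cons_val_two, Matrix.tail_cons, Matrix.head_cons]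
    rw [show (0:ℝ) - 2*θ2 = -(2*θ2) by ring]; exact hcn1 _ hc2
  have d03 : Real.cos ((![(0:ℝ), θ2, 2 * θ2, 3 * θ2]) 0 - (![(0:ℝ), θ2, 2 * θ2, 3 * θ2]) 3) ≠ 1 := by
    simp only [Matrix.cons_val_zero, Matrix.cons_val_three, Matrix.tail_cons, Matrix.head_cons]
    rw [show (0:ℝ) - 3*θ2 = -(3*θ2) by ring]; exact hcn1 _ hc3
  have d10 : Real.cos ((![(0:ℝ), θ2, 2 * θ2, 3 * θ2]) 1 - (![(0:ℝ), θ2, 2 * θ2, 3 * θ2]) 0) ≠ 1 := by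
    simp only [Matrix.cons_val_zero, Matrix.cons_val_one, Matrix.head_cons]
    rw [show θ2 - (0:ℝ) = θ2 by ring]; exact hc1
  have d12 : Real.cos ((![(0:ℝ), θ2, 2 * θ2, 3 * θ2]) 1 - (![(0:ℝ), θ2, 2 * θ2, 3 * θ2]) 2) ≠ 1 := by
    simp only [Matrix.cons_val_zero, Matrix.cons_val_one, Matrix.cons_val_two, Matrix.tail_cons, Matrix.head_cons]
    rw [show θ2 - 2*θ2 = -θ2 by ring]; exact hcn1 _ hc1
  have d13 : Real.cos ((![(0:ℝ), θ2, 2 * θ2, 3 * θ2]) 1 - (![(0:ℝ), θ2, 2 * θ2, 3 * θ2]) 3) ≠ 1 := by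
    simp only [Matrix.cons_val_zero, Matrix.cons_val_one, Matrix.cons_val_three, Matrix.tail_cons, Matrix.head_cons]
    rw [show θ2 - 3*θ2 = -(2*θ2) by ring]; exact hcn1 _ hc2
  have d20 : Real.cos ((![(0:ℝ), θ2, 2 * θ2, 3 * θ2]) 2 - (![(0:ℝ), θ2, 2 * θ2, 3 * θ2]) 0) ≠ 1 := by
    simp only [Matrix.cons_val_zero, Matrix.cons_val_two, Matrix.tail_cons, Matrix.head_cons]
    rw [show 2*θ2 - (0:ℝ) = 2*θ2 by ring]; exact hc2
  have d21 : Real.cos ((![(0:ℝ), θ2, 2 * θ2, 3 * θ2]) 2 - (![(0:ℝ), θ2, 2 * θ2, 3 * θ2]) 1) ≠ 1 := by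
    simp only [Matrix.cons_val_zero, Matrix.cons_val_one, Matrix.cons_val_two, Matrix.tail_cons, Matrix.head_cons]
    rw [show 2*θ2 - θ2 = θ2 by ring]; exact hc1
  have d23 : Real.cos ((![(0:ℝ), θ2, 2 * θ2, 3 * θ2]) 2 - (![(0:ℝ), θ2, 2 * θ2, 3 * θ2]) 3) ≠ 1 := by
    simp only [Matrix.cons_val_two, Matrix.cons_val_three, Matrix.tail_cons, Matrix.head_cons]
    rw [show 2*θ2 - 3*θ2 = -θ2 by ring]; exact hcn1 _ hc1
  have d30 : Real.cos ((![(0:ℝ), θ2, 2 * θ2, 3 * θ2]) 3 - (![(0:ℝ), θ2, 2 * θ2, 3 * θ2]) 0) ≠ 1 := by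
    simp only [Matrix.cons_val_zero, Matrix.cons_val_three, Matrix.tail_cons, Matrix.head_cons]
    rw [show 3*θ2 - (0:ℝ) = 3*θ2 by ring]; exact hc3
  have d31 : Real.cos ((![(0:ℝ), θ2, 2 * θ2, 3 * θ2]) 3 - (![(0:ℝ), θ2, 2 * θ2, 3 * θ2]) 1) ≠ 1 := by
    simp only [Matrix.cons_val_zero, Matrix.cons_val_one, Matrix.cons_val_three, Matrix.tail_cons, Matrix.head_cons]
    rw [show 3*θ2 - θ2 = 2*θ2 by ring]; exact hc2
  have d32 : Real.cos ((![(0:ℝ), θ2, 2 * θ2, 3 * θ2]) 3 - (![(0:ℝ), θ2, 2 * θ2, 3 * θ2]) 2) ≠ 1 := by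
    simp only [Matrix.cons_val_two, Matrix.cons_val_three, Matrix.tail_cons, Matrix.head_cons]
    rw [show 3*θ2 - 2*θ2 = θ2 by ring]; exact hc1
  have q0 := hcrit 0
  rw [pV0 ![μ1, μ2, μ3, μ4] ![0, θ2, 2 * θ2, 3 * θ2] d01 d02 d03] at q0
  have q1 := hcrit 1
  rw [pV1 ![μ1, μ2, μ3, μ4] ![0, θ2, 2 * θ2, 3 * θ2] d10 d12 d13] at q1
  have q2 := hcrit 2
  rw [pV2 ![μ1, μ2, μ3, μ4] ![0, θ2, 2 * θ2, 3 * θ2] d20 d21 d23] at q2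
  have q3 := hcrit 3
  rw [pV3 ![μ1, μ2, μ3, μ4] ![0, θ2, 2 * θ2, 3 * θ2] d30 d31 d32] at q3
  simp only [Matrix.cons_val_zero, Matrix.cons_val_one, Matrix.cons_val_two,
    Matrix.cons_val_three, Matrix.tail_cons, Matrix.head_cons] at q0 q1 q2 q3
  have q0' : μ1 * (μ2 * saux (0 - θ2) + μ3 * saux (0 - 2*θ2) + μ4 * saux (0 - 3*θ2)) = 0 := q0
  have q1' : μ2 * (μ1 * saux (θ2 - 0) + μ3 * saux (θ2 - 2*θ2) + μ4 * saux (θ2 - 3*θ2)) = 0 := q1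
  have q2' : μ3 * (μ1 * saux (2*θ2 - 0) + μ2 * saux (2*θ2 - θ2) + μ4 * saux (2*θ2 - 3*θ2)) = 0 := q2
  have q3' : μ4 * (μ1 * saux (3*θ2 - 0) + μ2 * saux (3*θ2 - θ2) + μ3 * saux (3*θ2 - 2*θ2)) = 0 := q3
  have E1 : μ2 * saux θ2 + μ3 * saux (2*θ2) + μ4 * saux (3*θ2) = 0 := by
    have h := (mul_eq_zero.mp q0').resolve_left h1
    rw [show (0:ℝ) - θ2 = -θ2 by ring, show (0:ℝ) - 2*θ2 = -(2*θ2) by ring,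
        show (0:ℝ) - 3*θ2 = -(3*θ2) by ring] at h
    simp only [saux_neg] at h
    linear_combination -h
  have E2 : μ1 * saux θ2 - μ3 * saux θ2 - μ4 * saux (2*θ2) = 0 := by
    have h := (mul_eq_zero.mp q1').resolve_left h2
    rw [show θ2 - (0:ℝ) = θ2 by ring, show θ2 - 2*θ2 = -θ2 by ring,
        show θ2 - 3*θ2 = -(2*θ2) by ring] at h
    simp only [saux_neg] at h
    linear_combination h
  have E3 : μ1 * saux (2*θ2) + μ2 * saux θ2 - μ4 * saux θ2 = 0 := by
    have h := (mul_eq_zero.mp q2').resolve_left h3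
    rw [show 2*θ2 - (0:ℝ) = 2*θ2 by ring, show 2*θ2 - θ2 = θ2 by ring,
        show 2*θ2 - 3*θ2 = -θ2 by ring] at h
    simp only [saux_neg] at h
    linear_combination h
  have E4 : μ1 * saux (3*θ2) + μ2 * saux (2*θ2) + μ3 * saux θ2 = 0 := by
    have h := (mul_eq_zero.mp q3').resolve_left h4
    rw [show 3*θ2 - (0:ℝ) = 3*θ2 by ring, show 3*θ2 - θ2 = 2*θ2 by ring,
        show 3*θ2 - 2*θ2 = θ2 by ring] at h
    linear_combination h
  -- convert to polynomial form
  have hS2 : Real.sin θ2 ^ 2 = 1 - Real.cos θ2 ^ 2 := by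
    nlinarith [Real.sin_sq_add_cos_sq θ2]
  have n1 : 2 - 2 * Real.cos θ2 ≠ 0 := by intro h; apply hc1; linarith
  have n2 : 2 - 2 * (2 * Real.cos θ2 ^ 2 - 1) ≠ 0 := by
    intro h; apply hc2; rw [Real.cos_two_mul]; linarith
  have n3 : 2 - 2 * (4 * Real.cos θ2 ^ 3 - 3 * Real.cos θ2) ≠ 0 := by
    intro h; apply hc3; rw [Real.cos_three_mul]; linarith
  rw [saux_eq _ hc1, saux_eq _ hc2, saux_eq _ hc3, Real.cos_two_mul, Real.sin_two_mul,
      Real.cos_three_mul, Real.sin_three_mul] at E1 E4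
  rw [saux_eq _ hc1, saux_eq _ hc2, Real.cos_two_mul, Real.sin_two_mul] at E2 E3
  generalize hxg : Real.cos θ2 = x at E1 E2 E3 E4 hS2 hc1 n1 n2 n3
  generalize hsg : Real.sin θ2 = S at E1 E2 E3 E4 hS2
  simp only [mul_div_assoc'] at E1 E2 E3 E4
  rw [div_add_div _ _ n1 n2, div_add_div _ _ (mul_ne_zero n1 n2) n3,
    div_eq_iff (mul_ne_zero (mul_ne_zero n1 n2) n3)] at E1
  rw [div_sub_div_same, div_sub_div _ _ n1 n2, div_eq_iff (mul_ne_zero n1 n2)] at E2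
  rw [div_add_div _ _ n2 n1, div_sub_div _ _ (mul_ne_zero n2 n1) n1,
    div_eq_iff (mul_ne_zero (mul_ne_zero n2 n1) n1)] at E3
  rw [div_add_div _ _ n3 n2, div_add_div _ _ (mul_ne_zero n3 n2) n1,
    div_eq_iff (mul_ne_zero (mul_ne_zero n3 n2) n1)] at E4
  -- nonvanishing facts
  have m1x : (1:ℝ) - x ≠ 0 := fun h => hc1 (by linarith)
  have p1x : (1:ℝ) + x ≠ 0 := fun h => n2 (by nlinarith)
  have t1x : 2*x + 1 ≠ 0 := by
    intro h
    apply n3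
    have hxv : x = -(1/2) := by linarith
    rw [hxv]; norm_num
  -- polynomial equations
  have hE1 : μ2*((1-x^2)*(1-4*x^2)) + μ3*(x*(3-4*x^2)*(1-x)*(2*x+1)) + μ4*((1-x^2)*(2*x-1)*(1+6*x-8*x^3)) = 0 := by
    have hfac : (8*(1-x)^2*(1+x)*(2*x+1)) * (μ2*((1-x^2)*(1-4*x^2)) + μ3*(x*(3-4*x^2)*(1-x)*(2*x+1)) + μ4*((1-x^2)*(2*x-1)*(1+6*x-8*x^3))) = 0 := by
      linear_combination S * E1 + ((8)*μ4 + (-8)*μ2 + (40)*x*μ4 + (-24)*x*μ3 + (-8)*x*μ2 + (-88)*x^2*μ4 + (-48)*x^2*μ3 + (56)*x^2*μ2 + (-264)*x^3*μ4 + (104)*x^3*μ3 + (40)*x^3*μ2 + (336)*x^4*μ4 + (160)*x^4*μ3 + (-112)*x^4*μ2 + (480)*x^5*μ4 + (-192)*x^5*μ3 + (-32)*x^5*μ2 + (-512)*x^6*μ4 + (-128)*x^6*μ3 + (64)*x^6*μ2 + (-256)*x^7*μ4 + (128)*x^7*μ3 + (256)*x^8*μ4 + (32)*S^2*μ4 +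 (160)*S^2*x*μ4 + (-224)*S^2*x^2*μ4 + (-416)*S^2*x^3*μ4 + (448)*S^2*x^4*μ4 + (256)*S^2*x^5*μ4 + (-256)*S^2*x^6*μ4) * hS2
    exact (mul_eq_zero.mp hfac).resolve_left
      (mul_ne_zero (mul_ne_zero (mul_ne_zero (by norm_num) (pow_ne_zero 2 m1x)) p1x) t1x)
  have hE2 : (μ1-μ3)*((1-x^2)*(1-4*x^2)) - μ4*(x*(3-4*x^2)*(1-x)*(2*x+1)) = 0 := by
    have hfac : (4*(1-x)*(1+x)) * ((μ1-μ3)*((1-x^2)*(1-4*x^2)) - μ4*(x*(3-4*x^2)*(1-x)*(2*x+1))) = 0 := by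
      linear_combination ((2*x+1)*S) * E2 + ((4)*μ3 + (-4)*μ1 + (12)*x*μ4 + (12)*x^2*μ4 + (-20)*x^2*μ3 + (20)*x^2*μ1 + (-40)*x^3*μ4 + (-16)*x^4*μ4 + (16)*x^4*μ3 + (-16)*x^4*μ1 + (32)*x^5*μ4) * hS2
    exact (mul_eq_zero.mp hfac).resolve_left
      (mul_ne_zero (mul_ne_zero (by norm_num) m1x) p1x)
  have hE3 : μ1*(x*(3-4*x^2)*(1-x)*(2*x+1)) + (μ2-μ4)*((1-x^2)*(1-4*x^2)) = 0 := by
    have hfac : (8*(1-x)^2*(1+x)) * (μ1*(x*(3-4*x^2)*(1-x)*(2*x+1)) + (μ2-μ4)*((1-x^2)*(1-4*x^2))) = 0 := by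
      linear_combination ((2*x+1)*S) * E3 + ((8)*μ4 + (-8)*μ2 + (-8)*x*μ4 + (8)*x*μ2 + (-24)*x*μ1 + (-40)*x^2*μ4 + (40)*x^2*μ2 + (40)*x^3*μ4 + (-40)*x^3*μ2 + (104)*x^3*μ1 + (32)*x^4*μ4 + (-32)*x^4*μ2 + (-48)*x^4*μ1 + (-32)*x^5*μ4 + (32)*x^5*μ2 + (-96)*x^5*μ1 + (64)*x^6*μ1) * hS2
    exact (mul_eq_zero.mp hfac).resolve_left
      (mul_ne_zero (mul_ne_zero (by norm_num) (pow_ne_zero 2 m1x)) p1x)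
  have hE4 : μ1*((1-x^2)*(2*x-1)*(1+6*x-8*x^3)) + μ2*(x*(3-4*x^2)*(1-x)*(2*x+1)) + μ3*((1-x^2)*(1-4*x^2)) = 0 := by
    have hfac : (8*(1-x)^2*(1+x)*(2*x+1)) * (μ1*((1-x^2)*(2*x-1)*(1+6*x-8*x^3)) + μ2*(x*(3-4*x^2)*(1-x)*(2*x+1)) + μ3*((1-x^2)*(1-4*x^2))) = 0 := by
      linear_combination S * E4 + ((-8)*μ3 + (8)*μ1 + (-8)*x*μ3 + (-24)*x*μ2 + (40)*x*μ1 + (56)*x^2*μ3 + (-48)*x^2*μ2 + (-88)*x^2*μ1 + (40)*x^3*μ3 + (104)*x^3*μ2 + (-264)*x^3*μ1 + (-112)*x^4*μ3 + (160)*x^4*μ2 + (336)*x^4*μ1 + (-32)*x^5*μ3 + (-192)*x^5*μ2 + (480)*x^5*μ1 + (64)*x^6*μ3 + (-128)*x^6*μ2 + (-512)*x^6*μ1 + (128)*x^7*μ2 + (-256)*x^7*μ1 + (256)*x^8*μ1 + (32)*S^2*μ1 + (160)*S^2*x*μ1 + (-224)*S^2*x^2*μ1 + (-416)*S^2*x^3*μ1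 + (448)*S^2*x^4*μ1 + (256)*S^2*x^5*μ1 + (-256)*S^2*x^6*μ1) * hS2
    exact (mul_eq_zero.mp hfac).resolve_left
      (mul_ne_zero (mul_ne_zero (mul_ne_zero (by norm_num) (pow_ne_zero 2 m1x)) p1x) t1x)
  rcases eq_or_ne x 0 with hx0 | hx0
  · -- x = 0 : E1 gives μ2 = μ4
    have hmm : μ2 - μ4 = 0 := by
      linear_combination hE1 - ((-4)*μ4 + (3)*μ3 + (13)*x*μ4 + (3)*x*μ3 + (-5)*x*μ2 + (12)*x^2*μ4 + (-10)*x^2*μ3 + (-28)*x^3*μ4 + (-4)*x^3*μ3 + (4)*x^3*μ2 + (-8)*x^4*μ4 + (8)*x^4*μ3 + (16)*x^5*μ4) * hx0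
    rw [hmm, zero_mul]
  · -- main case
    have hQ5 : (16*x^5+8*x^4-8*x^3+2*x^2-x-4) = 0 := by
      have hQm : ((x*(x-1)^2*(2*x+1)) * ((16*x^5+8*x^4-8*x^3+2*x^2-x-4))) * μ1 = 0 := by
        linear_combination (((1-x^2)*(1-4*x^2))) * hE2 - ((x*(3-4*x^2)*(1-x)*(2*x+1))) * hE3 + (((1-x^2)*(1-4*x^2))) * hE4
      have h' := (mul_eq_zero.mp hQm).resolve_right h1
      exact (mul_eq_zero.mp h').resolve_left
        (mul_ne_zero (mul_ne_zero hx0 (pow_ne_zero 2 (sub_ne_zero.mpr (fun hh => hc1 hh)))) t1x)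
    have hp1 : 4 * μ2 ^ 5 + 2 * μ2 ^ 3 * μ3 ^ 2 + 10 * μ2 ^ 2 * μ3 ^ 3 - 22 * μ2 * μ3 ^ 4 + 8 * μ3 ^ 5 - 24 * μ2 ^ 4 * μ4 - 30 * μ2 ^ 3 * μ3 * μ4 + 82 * μ2 ^ 2 * μ3 ^ 2 * μ4 - 60 * μ2 * μ3 ^ 3 * μ4 + 22 * μ3 ^ 4 * μ4 + 13 * μ2 ^ 3 * μ4 ^ 2 + 135 * μ2 ^ 2 * μ3 * μ4 ^ 2 - 181 * μ2 * μ3 ^ 2 * μ4 ^ 2 + 54 * μ3 ^ 3 * μ4 ^ 2 + 112 * μ2 ^ 2 * μ4 ^ 3 - 247 * μ2 * μ3 * μ4 ^ 3 + 117 * μ3 ^ 2 * μ4 ^ 3 - 106 * μ2 * μ4 ^ 4 + 98 * μ3 * μ4 ^ 4 + 17 * μ4 ^ 5 = 0 := by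
      linear_combination ((-583/13:ℝ)*μ4^5 + (-1293/13:ℝ)*μ3*μ4^4 + (-875/13:ℝ)*μ3^2*μ4^3 + (-357/13:ℝ)*μ3^3*μ4^2 + (-162/13:ℝ)*μ3^4*μ4 + (-2)*μ3^5 + (1889/13:ℝ)*μ2*μ4^4 + (3070/13:ℝ)*μ2*μ3*μ4^3 + (1459/13:ℝ)*μ2*μ3^2*μ4^2 + (548/13:ℝ)*μ2*μ3^3*μ4 + (162/13:ℝ)*μ2*μ3^4 + (-1736/13:ℝ)*μ2^2*μ4^3 + (-2255/13:ℝ)*μ2^2*μ3*μ4^2 + (-681/13:ℝ)*μ2^2*μ3^2*μ4 + (-204/13:ℝ)*μ2^2*μ3^3 + (329/13:ℝ)*μ2^3*μ4^2 + (677/13:ℝ)*μ2^3*μ3*μ4 + (32/13:ℝ)*μ2^3*μ3^2 + (67/13:ℝ)*μ2^4*μ4 + (-56/13:ℝ)*μ2^4*μ3 + (-18/13:ℝ)*μ2^5 + (-1459/13:ℝ)*x*μ4^5 + (-1258/13:ℝ)*x*μ3*μ4^4 + (1493/13:ℝ)*x*μ3^2*μ4^3 + (996/13:ℝ)*x*μ3^3*μ4^2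 + (274/13:ℝ)*x*μ3^4*μ4 + (278/13:ℝ)*x*μ3^5 + (2316/13:ℝ)*x*μ2*μ4^4 + (-448/13:ℝ)*x*μ2*μ3*μ4^3 + (-3317/13:ℝ)*x*μ2*μ3^2*μ4^2 + (-869/13:ℝ)*x*μ2*μ3^3*μ4 + (-606/13:ℝ)*x*μ2*μ3^4 + (80/13:ℝ)*x*μ2^2*μ4^3 + (1036/13:ℝ)*x*μ2^2*μ3*μ4^2 + (1873/13:ℝ)*x*μ2^2*μ3^2*μ4 + (308/13:ℝ)*x*μ2^2*μ3^3 + (-335/13:ℝ)*x*μ2^3*μ4^2 + (-473/13:ℝ)*x*μ2^3*μ3*μ4 + (-214/13:ℝ)*x*μ2^3*μ3^2 + (22/13:ℝ)*x*μ2^4*μ4 + (46/13:ℝ)*x*μ2^4*μ3 + (8/13:ℝ)*x*μ2^5 + (8473/13:ℝ)*x^2*μ4^5 + (14453/13:ℝ)*x^2*μ3*μ4^4 + (7205/13:ℝ)*x^2*μ3^2*μ4^3 + (2867/13:ℝ)*x^2*μ3^3*μ4^2 + (1254/13:ℝ)*x^2*μ3^4*μ4 + (36/13:ℝ)*x^2*μ3^5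 + (-17213/13:ℝ)*x^2*μ2*μ4^4 + (-23103/13:ℝ)*x^2*μ2*μ3*μ4^3 + (-6679/13:ℝ)*x^2*μ2*μ3^2*μ4^2 + (-3327/13:ℝ)*x^2*μ2*μ3^3*μ4 + (-18)*x^2*μ2*μ3^4 + (8976/13:ℝ)*x^2*μ2^2*μ4^3 + (12342/13:ℝ)*x^2*μ2^2*μ3*μ4^2 + (128)*x^2*μ2^2*μ3^2*μ4 + (566/13:ℝ)*x^2*μ2^2*μ3^3 + (-1783/13:ℝ)*x^2*μ2^3*μ4^2 + (-2612/13:ℝ)*x^2*μ2^3*μ3*μ4 + (-152/13:ℝ)*x^2*μ2^3*μ3^2 + (141/13:ℝ)*x^2*μ2^4*μ4 + (194/13:ℝ)*x^2*μ2^4*μ3 + (-6/13:ℝ)*x^2*μ2^5 + (-4382/13:ℝ)*x^3*μ4^5 + (-9648/13:ℝ)*x^3*μ3*μ4^4 + (-9538/13:ℝ)*x^3*μ3^2*μ4^3 + (-360)*x^3*μ3^3*μ4^2 + (-1672/13:ℝ)*x^3*μ3^4*μ4 + (-648/13:ℝ)*x^3*μ3^5 + (7454/13:ℝ)*x^3*μ2*μ4^4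 + (18514/13:ℝ)*x^3*μ2*μ3*μ4^3 + (13144/13:ℝ)*x^3*μ2*μ3^2*μ4^2 + (328)*x^3*μ2*μ3^3*μ4 + (1624/13:ℝ)*x^3*μ2*μ3^4 + (-4688/13:ℝ)*x^3*μ2^2*μ4^3 + (-10844/13:ℝ)*x^3*μ2^2*μ3*μ4^2 + (-5410/13:ℝ)*x^3*μ2^2*μ3^2*μ4 + (-1028/13:ℝ)*x^3*μ2^2*μ3^3 + (1522/13:ℝ)*x^3*μ2^3*μ4^2 + (2622/13:ℝ)*x^3*μ2^3*μ3*μ4 + (720/13:ℝ)*x^3*μ2^3*μ3^2 + (-270/13:ℝ)*x^3*μ2^4*μ4 + (-224/13:ℝ)*x^3*μ2^4*μ3 + (20/13:ℝ)*x^3*μ2^5 + (-7992/13:ℝ)*x^4*μ4^5 + (-11836/13:ℝ)*x^4*μ3*μ4^4 + (-2576/13:ℝ)*x^4*μ3^2*μ4^3 + (-548/13:ℝ)*x^4*μ3^3*μ4^2 + (-408/13:ℝ)*x^4*μ3^4*μ4 + (368/13:ℝ)*x^4*μ3^5 + (15960/13:ℝ)*x^4*μ2*μ4^4 + (16240/13:ℝ)*x^4*μ2*μ3*μ4^3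 + (-1548/13:ℝ)*x^4*μ2*μ3^2*μ4^2 + (1260/13:ℝ)*x^4*μ2*μ3^3*μ4 + (-968/13:ℝ)*x^4*μ2*μ3^4 + (-7912/13:ℝ)*x^4*μ2^2*μ4^3 + (-6120/13:ℝ)*x^4*μ2^2*μ3*μ4^2 + (1900/13:ℝ)*x^4*μ2^2*μ3^2*μ4 + (368/13:ℝ)*x^4*μ2^2*μ3^3 + (1376/13:ℝ)*x^4*μ2^3*μ4^2 + (524/13:ℝ)*x^4*μ2^3*μ3*μ4 + (-384/13:ℝ)*x^4*μ2^3*μ3^2 + (-64/13:ℝ)*x^4*μ2^4*μ4 + (40/13:ℝ)*x^4*μ2^4*μ3 + (5960/13:ℝ)*x^5*μ4^5 + (9680/13:ℝ)*x^5*μ3*μ4^4 + (4408/13:ℝ)*x^5*μ3^2*μ4^3 + (1776/13:ℝ)*x^5*μ3^3*μ4^2 + (736/13:ℝ)*x^5*μ3^4*μ4 + (-10512/13:ℝ)*x^5*μ2*μ4^4 + (-14520/13:ℝ)*x^5*μ2*μ3*μ4^3 + (-3240/13:ℝ)*x^5*μ2*μ3^2*μ4^2 + (-1936/13:ℝ)*x^5*μ2*μ3^3*μ4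 + (5392/13:ℝ)*x^5*μ2^2*μ4^3 + (5976/13:ℝ)*x^5*μ2^2*μ3*μ4^2 + (736/13:ℝ)*x^5*μ2^2*μ3^2*μ4 + (-1096/13:ℝ)*x^5*μ2^3*μ4^2 + (-768/13:ℝ)*x^5*μ2^3*μ3*μ4 + (80/13:ℝ)*x^5*μ2^4*μ4) * hQ5 + ((2111/13:ℝ)*μ4^4 + (3898/13:ℝ)*μ3*μ4^3 + (1979/13:ℝ)*μ3^2*μ4^2 + (726/13:ℝ)*μ3^3*μ4 + (362/13:ℝ)*μ3^4 + (-4067/13:ℝ)*μ2*μ4^3 + (-5171/13:ℝ)*μ2*μ3*μ4^2 + (-1504/13:ℝ)*μ2*μ3^2*μ4 + (-686/13:ℝ)*μ2*μ3^3 + (1421/13:ℝ)*μ2^2*μ4^2 + (2094/13:ℝ)*μ2^2*μ3*μ4 + (154/13:ℝ)*μ2^2*μ3^2 + (-64/13:ℝ)*μ2^3*μ4 + (-224/13:ℝ)*μ2^3*μ3 + (-20/13:ℝ)*μ2^4 + (-2025/13:ℝ)*x*μ4^4 + (-2934/13:ℝ)*x*μ3*μ4^3 + (-1319/13:ℝ)*x*μ3^2*μ4^2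 + (-594/13:ℝ)*x*μ3^3*μ4 + (-204/13:ℝ)*x*μ3^4 + (3090/13:ℝ)*x*μ2*μ4^3 + (4271/13:ℝ)*x*μ2*μ3*μ4^2 + (993/13:ℝ)*x*μ2*μ3^2*μ4 + (566/13:ℝ)*x*μ2*μ3^3 + (-1178/13:ℝ)*x*μ2^2*μ4^2 + (-1731/13:ℝ)*x*μ2^2*μ3*μ4 + (-152/13:ℝ)*x*μ2^2*μ3^2 + (89/13:ℝ)*x*μ2^3*μ4 + (188/13:ℝ)*x*μ2^3*μ3 + (14/13:ℝ)*x*μ2^4 + (1944/13:ℝ)*x^2*μ4^4 + (3528/13:ℝ)*x^2*μ3*μ4^3 + (1832/13:ℝ)*x^2*μ3^2*μ4^2 + (616/13:ℝ)*x^2*μ3^3*μ4 + (304/13:ℝ)*x^2*μ3^4 + (-3528/13:ℝ)*x^2*μ2*μ4^3 + (-4200/13:ℝ)*x^2*μ2*μ3*μ4^2 + (-1336/13:ℝ)*x^2*μ2*μ3^2*μ4 + (-456/13:ℝ)*x^2*μ2*μ3^3 + (536/13:ℝ)*x^2*μ2^2*μ4^2 + (1616/13:ℝ)*x^2*μ2^2*μ3*μ4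 + (-8/13:ℝ)*x^2*μ2^2*μ3^2 + (368/13:ℝ)*x^2*μ2^3*μ4 + (-168/13:ℝ)*x^2*μ2^3*μ3 + (-80/13:ℝ)*x^2*μ2^4 + (2032/13:ℝ)*x^3*μ4^4 + (5136/13:ℝ)*x^3*μ3*μ4^3 + (3008/13:ℝ)*x^3*μ3^2*μ4^2 + (976/13:ℝ)*x^3*μ3^3*μ4 + (560/13:ℝ)*x^3*μ3^4 + (-5448/13:ℝ)*x^3*μ2*μ4^3 + (-6976/13:ℝ)*x^3*μ2*μ3*μ4^2 + (-2472/13:ℝ)*x^3*μ2*μ3^2*μ4 + (-944/13:ℝ)*x^3*μ2*μ3^3 + (2520/13:ℝ)*x^3*μ2^2*μ4^2 + (2840/13:ℝ)*x^3*μ2^2*μ3*μ4 + (352/13:ℝ)*x^3*μ2^2*μ3^2 + (-280/13:ℝ)*x^3*μ2^3*μ4 + (-304/13:ℝ)*x^3*μ2^3*μ3 + (-16/13:ℝ)*x^3*μ2^4 + (-5960/13:ℝ)*x^4*μ4^4 + (-9680/13:ℝ)*x^4*μ3*μ4^3 + (-4408/13:ℝ)*x^4*μ3^2*μ4^2 +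 (-1776/13:ℝ)*x^4*μ3^3*μ4 + (-736/13:ℝ)*x^4*μ3^4 + (10512/13:ℝ)*x^4*μ2*μ4^3 + (14520/13:ℝ)*x^4*μ2*μ3*μ4^2 + (3240/13:ℝ)*x^4*μ2*μ3^2*μ4 + (1936/13:ℝ)*x^4*μ2*μ3^3 + (-5392/13:ℝ)*x^4*μ2^2*μ4^2 + (-5976/13:ℝ)*x^4*μ2^2*μ3*μ4 + (-736/13:ℝ)*x^4*μ2^2*μ3^2 + (1096/13:ℝ)*x^4*μ2^3*μ4 + (768/13:ℝ)*x^4*μ2^3*μ3 + (-80/13:ℝ)*x^4*μ2^4) * hE1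
    rw [hp1, mul_zero]
end

section
/- Let μ1, μ2 be nonzero real numbers and set μ3 = μ1, μ4 = μ2, and let θ2 ∈ (0, 2π) be such that the four angles 0, θ2, 2θ2, 3θ2 are pairwise distinct modulo 2π. Then (0, θ2, 2θ2, 3θ2) is a critical point of V if and only if θ2 = π/2 or θ2 = 3π/2. (With μ3 = μ1 and μ4 = μ2, the only equally spaced configurations are square configurations.) -/
open Real Polynomial

/-! ### Auxiliary definitions and lemmas -/

/-- The summand function `cos x + (1/2) log (2 - 2 cos x)`. -/
noncomputable def Fv (x : ℝ) : ℝ := Real.cos x + 1/2 * Real.log (2 - 2*Real.cos x)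

/-- The derivative of `Fv`. -/
noncomputable def Dv (x : ℝ) : ℝ := -Real.sin x + Real.sin x / (2 - 2*Real.cos x)

lemma Dv_neg (x : ℝ) : Dv (-x) = -Dv x := by simp [Dv, neg_div]; ring

lemma hasDerivAt_Fv {x : ℝ} (hx : Real.cos x ≠ 1) : HasDerivAt Fv (Dv x) x := by
  have hpos : (0:ℝ) < 2 - 2 * Real.cos x := by
    have h := Real.cos_le_one x
    have : Real.cos x < 1 := lt_of_le_of_ne h hx
    linarith
  have h1 : HasDerivAt (fun y => 2 - 2*Real.cos y) (2*Real.sin x) x := by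
    simpa [mul_comm] using (((Real.hasDerivAt_cos x).const_mul 2).const_sub 2)
  have h3 := (Real.hasDerivAt_cos x).add ((h1.log hpos.ne').const_mul (1/2 : ℝ))
  refine h3.congr_deriv ?_
  unfold Dv
  field_simp

lemma hasDerivAt_Fv_sub {x d : ℝ} (hx : Real.cos (x - d) ≠ 1) :
    HasDerivAt (fun s => Fv (s - d)) (Dv (x - d)) x := by
  have h := (hasDerivAt_Fv hx).comp x ((hasDerivAt_id x).sub_const d)
  simp only [mul_one] at h
  exact h

lemma hasDerivAt_Fv_sub' {x c : ℝ} (hx : Real.cos (x - c) ≠ 1) :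
    HasDerivAt (fun s => Fv (c - s)) (Dv (x - c)) x := by
  have hx' : Real.cos (c - x) ≠ 1 := by rwa [← Real.cos_neg, neg_sub]
  have h := (hasDerivAt_Fv hx').comp x ((hasDerivAt_id x).const_sub c)
  simp only [mul_neg_one] at h
  rw [← Dv_neg, neg_sub] at h
  exact h

lemma V_eq (μ θ : Fin 4 → ℝ) : V μ θ =
    -(μ 0 * μ 1 * Fv (θ 0 - θ 1) + μ 0 * μ 2 * Fv (θ 0 - θ 2) + μ 0 * μ 3 * Fv (θ 0 - θ 3)
      + μ 1 * μ 2 * Fv (θ 1 - θ 2) + μ 1 * μ 3 * Fv (θ 1 - θ 3) + μ 2 * μ 3 * Fv (θ 2 - θ 3)) := by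
  rw [V, Fin.sum_univ_four,
      show (Finset.Ioi (0 : Fin 4)) = {1,2,3} from by decide,
      show (Finset.Ioi (1 : Fin 4)) = {2,3} from by decide,
      show (Finset.Ioi (2 : Fin 4)) = {3} from by decide,
      show (Finset.Ioi (3 : Fin 4)) = ∅ from by decide]
  simp [Fv]
  ring

section PartialDerivatives
variable (a b t : ℝ)

lemma pV0_eq (hc1 : Real.cos t ≠ 1) (hc2 : Real.cos (2*t) ≠ 1) (hc3 : Real.cos (3*t) ≠ 1) :
    partialV ![a,b,a,b] ![0,t,2*t,3*t] 0
      = a*b*(Dv t + Dv (3*t)) + a*a*Dv (2*t) := by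
  have key : (fun s => V ![a,b,a,b] (Function.update (![0,t,2*t,3*t] : Fin 4 → ℝ) 0 s))
      = fun s => -(a*b*Fv (s - t) + (a*a)*Fv (s - 2*t) + (a*b)*Fv (s - 3*t)
          + (b*a*Fv (t-2*t) + b*b*Fv (t-3*t) + a*b*Fv (2*t-3*t))) := by
    funext s; rw [V_eq]; simp [Function.update_apply]; ring
  have h : HasDerivAt (fun s => -(a*b*Fv (s - t) + (a*a)*Fv (s - 2*t) + (a*b)*Fv (s - 3*t)
          + (b*a*Fv (t-2*t) + b*b*Fv (t-3*t) + a*b*Fv (2*t-3*t))))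
      (-(a*b*Dv ((0:ℝ) - t) + (a*a)*Dv ((0:ℝ) - 2*t) + (a*b)*Dv ((0:ℝ) - 3*t) + 0)) 0 :=
    (((((hasDerivAt_Fv_sub (by rw [show (0:ℝ)-t = -t by ring, Real.cos_neg]; exact hc1)).const_mul (a*b)).add
      ((hasDerivAt_Fv_sub (by rw [show (0:ℝ)-2*t = -(2*t) by ring, Real.cos_neg]; exact hc2)).const_mul (a*a))).add
      ((hasDerivAt_Fv_sub (by rw [show (0:ℝ)-3*t = -(3*t) by ring, Real.cos_neg]; exact hc3)).const_mul (a*b))).add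
      (hasDerivAt_const 0 _)).neg
  have hp : partialV ![a,b,a,b] ![0,t,2*t,3*t] 0
      = deriv (fun s => V ![a,b,a,b] (Function.update (![0,t,2*t,3*t] : Fin 4 → ℝ) 0 s)) 0 := by
    simp [partialV]
  rw [hp, key, h.deriv, show (0:ℝ)-t = -t by ring, show (0:ℝ)-2*t = -(2*t) by ring,
      show (0:ℝ)-3*t = -(3*t) by ring, Dv_neg, Dv_neg, Dv_neg]
  ring

lemma pV1_eq (hc1 : Real.cos t ≠ 1) (hc2 : Real.cos (2*t) ≠ 1) :
    partialV ![a,b,a,b] ![0,t,2*t,3*t] 1 = b*b*Dv (2*t) := by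
  have key : (fun s => V ![a,b,a,b] (Function.update (![0,t,2*t,3*t] : Fin 4 → ℝ) 1 s))
      = fun s => -(a*b*Fv ((0:ℝ) - s) + (b*a)*Fv (s - 2*t) + (b*b)*Fv (s - 3*t)
          + (a*a*Fv ((0:ℝ)-2*t) + a*b*Fv ((0:ℝ)-3*t) + a*b*Fv (2*t-3*t))) := by
    funext s; rw [V_eq]; simp [Function.update_apply]; ring
  have h : HasDerivAt (fun s => -(a*b*Fv ((0:ℝ) - s) + (b*a)*Fv (s - 2*t) + (b*b)*Fv (s - 3*t)
          + (a*a*Fv ((0:ℝ)-2*t) + a*b*Fv ((0:ℝ)-3*t) + a*b*Fv (2*t-3*t))))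
      (-(a*b*Dv (t - 0) + (b*a)*Dv (t - 2*t) + (b*b)*Dv (t - 3*t) + 0)) t :=
    (((((hasDerivAt_Fv_sub' (by rw [show t-(0:ℝ) = t by ring]; exact hc1)).const_mul (a*b)).add
      ((hasDerivAt_Fv_sub (by rw [show t-2*t = -t by ring, Real.cos_neg]; exact hc1)).const_mul (b*a))).add
      ((hasDerivAt_Fv_sub (by rw [show t-3*t = -(2*t) by ring, Real.cos_neg]; exact hc2)).const_mul (b*b))).add
      (hasDerivAt_const t _)).neg
  have hp : partialV ![a,b,a,b] ![0,t,2*t,3*t] 1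
      = deriv (fun s => V ![a,b,a,b] (Function.update (![0,t,2*t,3*t] : Fin 4 → ℝ) 1 s)) t := by
    simp [partialV]
  rw [hp, key, h.deriv, show t-(0:ℝ) = t by ring, show t-2*t = -t by ring,
      show t-3*t = -(2*t) by ring, Dv_neg, Dv_neg]
  ring

lemma pV2_eq (hc1 : Real.cos t ≠ 1) (hc2 : Real.cos (2*t) ≠ 1) :
    partialV ![a,b,a,b] ![0,t,2*t,3*t] 2 = -(a*a*Dv (2*t)) := by
  have key : (fun s => V ![a,b,a,b] (Function.update (![0,t,2*t,3*t] : Fin 4 → ℝ) 2 s))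
      = fun s => -((a*a)*Fv ((0:ℝ) - s) + (b*a)*Fv (t - s) + (a*b)*Fv (s - 3*t)
          + (a*b*Fv ((0:ℝ)-t) + a*b*Fv ((0:ℝ)-3*t) + b*b*Fv (t-3*t))) := by
    funext s; rw [V_eq]; simp [Function.update_apply]; ring
  have h : HasDerivAt (fun s => -((a*a)*Fv ((0:ℝ) - s) + (b*a)*Fv (t - s) + (a*b)*Fv (s - 3*t)
          + (a*b*Fv ((0:ℝ)-t) + a*b*Fv ((0:ℝ)-3*t) + b*b*Fv (t-3*t))))
      (-((a*a)*Dv (2*t - 0) + (b*a)*Dv (2*t - t) + (a*b)*Dv (2*t - 3*t) + 0)) (2*t) :=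
    (((((hasDerivAt_Fv_sub' (by rw [show 2*t-(0:ℝ) = 2*t by ring]; exact hc2)).const_mul (a*a)).add
      ((hasDerivAt_Fv_sub' (by rw [show 2*t-t = t by ring]; exact hc1)).const_mul (b*a))).add
      ((hasDerivAt_Fv_sub (by rw [show 2*t-3*t = -t by ring, Real.cos_neg]; exact hc1)).const_mul (a*b))).add
      (hasDerivAt_const (2*t) _)).neg
  have hp : partialV ![a,b,a,b] ![0,t,2*t,3*t] 2
      = deriv (fun s => V ![a,b,a,b] (Function.update (![0,t,2*t,3*t] : Fin 4 → ℝ) 2 s)) (2*t) := by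
    simp [partialV]
  rw [hp, key, h.deriv, show 2*t-(0:ℝ) = 2*t by ring, show 2*t-t = t by ring,
      show 2*t-3*t = -t by ring, Dv_neg]
  ring

lemma pV3_eq (hc1 : Real.cos t ≠ 1) (hc2 : Real.cos (2*t) ≠ 1) (hc3 : Real.cos (3*t) ≠ 1) :
    partialV ![a,b,a,b] ![0,t,2*t,3*t] 3
      = -(a*b*(Dv t + Dv (3*t)) + b*b*Dv (2*t)) := by
  have key : (fun s => V ![a,b,a,b] (Function.update (![0,t,2*t,3*t] : Fin 4 → ℝ) 3 s))
      = fun s => -((a*b)*Fv ((0:ℝ) - s) + (b*b)*Fv (t - s) + (a*b)*Fv (2*t - s)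
          + (a*b*Fv ((0:ℝ)-t) + a*a*Fv ((0:ℝ)-2*t) + b*a*Fv (t-2*t))) := by
    funext s; rw [V_eq]; simp [Function.update_apply]; ring
  have h : HasDerivAt (fun s => -((a*b)*Fv ((0:ℝ) - s) + (b*b)*Fv (t - s) + (a*b)*Fv (2*t - s)
          + (a*b*Fv ((0:ℝ)-t) + a*a*Fv ((0:ℝ)-2*t) + b*a*Fv (t-2*t))))
      (-((a*b)*Dv (3*t - 0) + (b*b)*Dv (3*t - t) + (a*b)*Dv (3*t - 2*t) + 0)) (3*t) :=
    (((((hasDerivAt_Fv_sub' (by rw [show 3*t-(0:ℝ) = 3*t by ring]; exact hc3)).const_mul (a*b)).add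
      ((hasDerivAt_Fv_sub' (by rw [show 3*t-t = 2*t by ring]; exact hc2)).const_mul (b*b))).add
      ((hasDerivAt_Fv_sub' (by rw [show 3*t-2*t = t by ring]; exact hc1)).const_mul (a*b))).add
      (hasDerivAt_const (3*t) _)).neg
  have hp : partialV ![a,b,a,b] ![0,t,2*t,3*t] 3
      = deriv (fun s => V ![a,b,a,b] (Function.update (![0,t,2*t,3*t] : Fin 4 → ℝ) 3 s)) (3*t) := by
    simp [partialV]
  rw [hp, key, h.deriv, show 3*t-(0:ℝ) = 3*t by ring, show 3*t-t = 2*t by ring,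
      show 3*t-2*t = t by ring]
  ring

lemma crit_iff (ha : a ≠ 0) (hb : b ≠ 0)
    (hc1 : Real.cos t ≠ 1) (hc2 : Real.cos (2*t) ≠ 1) (hc3 : Real.cos (3*t) ≠ 1) :
    IsCriticalPt ![a,b,a,b] ![0,t,2*t,3*t] ↔ (Dv (2*t) = 0 ∧ Dv t + Dv (3*t) = 0) := by
  constructor
  · intro h
    have h1 := h 1
    have h0 := h 0
    rw [pV1_eq a b t hc1 hc2] at h1
    rw [pV0_eq a b t hc1 hc2 hc3] at h0
    have hD2 : Dv (2*t) = 0 := by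
      rcases mul_eq_zero.1 h1 with h' | h'
      · exact absurd h' (mul_ne_zero hb hb)
      · exact h'
    refine ⟨hD2, ?_⟩
    rw [hD2] at h0
    have : a*b*(Dv t + Dv (3*t)) = 0 := by linarith
    rcases mul_eq_zero.1 this with h' | h'
    · exact absurd h' (mul_ne_zero ha hb)
    · exact h'
  · rintro ⟨hD2, hD13⟩ k
    fin_cases k
    · show partialV ![a,b,a,b] ![0,t,2*t,3*t] 0 = 0
      rw [pV0_eq a b t hc1 hc2 hc3, hD2, hD13]; ring
    · show partialV ![a,b,a,b] ![0,t,2*t,3*t] 1 = 0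
      rw [pV1_eq a b t hc1 hc2, hD2]; ring
    · show partialV ![a,b,a,b] ![0,t,2*t,3*t] 2 = 0
      rw [pV2_eq a b t hc1 hc2, hD2]; ring
    · show partialV ![a,b,a,b] ![0,t,2*t,3*t] 3 = 0
      rw [pV3_eq a b t hc1 hc2 hc3, hD2, hD13]; ring
end PartialDerivatives

lemma Dv_eq (x : ℝ) (hx : Real.cos x ≠ 1) :
    Dv x = Real.sin x * (2*Real.cos x - 1) / (2 - 2*Real.cos x) := by
  have h : (2 : ℝ) - 2*Real.cos x ≠ 0 := by
    have := lt_of_le_of_ne (Real.cos_le_one x) hx; intro h'; linarith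
  rw [Dv]; field_simp; ring

lemma backward_lemma (t : ℝ) (hc : Real.cos t = 0) :
    Dv (2*t) = 0 ∧ Dv t + Dv (3*t) = 0 := by
  have hpy := Real.sin_sq_add_cos_sq t
  have h2s : Real.sin (2*t) = 0 := by rw [Real.sin_two_mul, hc]; ring
  have h3c : Real.cos (3*t) = 0 := by rw [Real.cos_three_mul, hc]; ring
  have hs2 : Real.sin t^2 = 1 := by nlinarith
  have h3s : Real.sin (3*t) = -Real.sin t := by
    rw [Real.sin_three_mul]; linear_combination (-4*Real.sin t)*hs2
  constructor
  · simp [Dv, h2s]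
  · rw [Dv, Dv, h3s, h3c, hc]; ring

lemma forward_lemma (t : ℝ) (h0 : 0 < t) (h4 : t < 2*π)
    (hc1 : Real.cos t ≠ 1) (hc2 : Real.cos (2*t) ≠ 1)
    (hD2 : Dv (2*t) = 0) (hD13 : Dv t + Dv (3*t) = 0) :
    t = π/2 ∨ t = 3*π/2 := by
  have hpy := Real.sin_sq_add_cos_sq t
  have hclt : Real.cos t < 1 := lt_of_le_of_ne (Real.cos_le_one t) hc1
  have hden2 : (2:ℝ) - 2*Real.cos (2*t) ≠ 0 := by
    have := lt_of_le_of_ne (Real.cos_le_one (2*t)) hc2; intro h'; linarith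
  have hnum : Real.sin (2*t) * (2*Real.cos (2*t) - 1) = 0 := by
    have h := hD2
    rw [Dv_eq _ hc2] at h
    rcases div_eq_zero_iff.mp h with h' | h'
    · exact h'
    · exact absurd (by linarith : (2:ℝ) - 2*Real.cos (2*t) = 0) hden2
  rw [Real.sin_two_mul, Real.cos_two_mul] at hnum
  have hkey : Real.sin t * Real.cos t * (4*Real.cos t^2 - 3) = 0 := by linear_combination hnum/2
  rcases mul_eq_zero.mp hkey with hsc | h43
  · rcases mul_eq_zero.mp hsc with hs | hc
    · exfalso
      apply hc2
      rw [Real.cos_two_mul]; nlinarith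
    · obtain ⟨n, hn⟩ := Real.cos_eq_zero_iff.mp hc
      have hπ := Real.pi_pos
      have hb1 : (0:ℝ) < 2*(n:ℝ)+1 := by nlinarith
      have hb2 : (2*(n:ℝ)+1) < 4 := by nlinarith
      have hn0 : n = 0 ∨ n = 1 := by
        have h1' : (0:ℤ) < 2*n+1 := by exact_mod_cast (by linarith : (0:ℝ) < 2*(n:ℝ)+1)
        have h2' : (2*n+1 : ℤ) < 4 := by exact_mod_cast (by linarith : (2*(n:ℝ)+1 : ℝ) < 4)
        omega
      rcases hn0 with rfl | rfl
      · left; rw [hn]; push_cast; ring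
      · right; rw [hn]; push_cast; ring
  · exfalso
    have hc2v : Real.cos t^2 = 3/4 := by linarith
    have hs2v : Real.sin t^2 = 1/4 := by nlinarith
    have h3c : Real.cos (3*t) = 0 := by rw [Real.cos_three_mul]; nlinarith
    have h3s : Real.sin (3*t) = 2*Real.sin t := by
      rw [Real.sin_three_mul]; linear_combination (-4*Real.sin t)*hs2v
    have hden : (2:ℝ) - 2*Real.cos t ≠ 0 := by intro h'; linarith
    have hsum : Dv t + Dv (3*t) = Real.sin t*(4*Real.cos t-3)/(2-2*Real.cos t) := by
      rw [Dv, Dv, h3s, h3c]; field_simp; ring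
    rw [hsum] at hD13
    rcases div_eq_zero_iff.mp hD13 with h' | h'
    · have hs0 : Real.sin t ≠ 0 := by intro h''; rw [h''] at hs2v; norm_num at hs2v
      have : 4*Real.cos t - 3 = 0 := by
        rcases mul_eq_zero.mp h' with h'' | h''
        · exact absurd h'' hs0
        · exact h''
      nlinarith
    · exact hden (by linarith)

/-- With `mu3 = mu1` and `mu4 = mu2`, the only equally spaced configurations
are squares: `theta2 = pi/2` or `theta2 = 3pi/2`. -/
theorem trapezoid_equal_pairs_is_square (μ1 μ2 θ2 : ℝ)
    (h1 : μ1 ≠ 0) (h2 : μ2 ≠ 0)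
    (hθ : θ2 ∈ Set.Ioo (0 : ℝ) (2 * π))
    (hdist : ∀ i j : Fin 4, i ≠ j → ∀ n : ℤ,
      (![0, θ2, 2 * θ2, 3 * θ2] : Fin 4 → ℝ) i -
        (![0, θ2, 2 * θ2, 3 * θ2] : Fin 4 → ℝ) j ≠ 2 * π * n) :
    IsCriticalPt ![μ1, μ2, μ1, μ2] ![0, θ2, 2 * θ2, 3 * θ2] ↔
      θ2 = π / 2 ∨ θ2 = 3 * π / 2 := by
  obtain ⟨hθ0, hθ4⟩ := hθ
  have hc1 : Real.cos θ2 ≠ 1 := by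
    intro h
    obtain ⟨n, hn⟩ := (Real.cos_eq_one_iff θ2).mp h
    apply hdist 1 0 (by decide) n
    show θ2 - (0:ℝ) = 2 * π * n
    linarith
  have hc2 : Real.cos (2*θ2) ≠ 1 := by
    intro h
    obtain ⟨n, hn⟩ := (Real.cos_eq_one_iff (2*θ2)).mp h
    apply hdist 2 0 (by decide) n
    show 2*θ2 - (0:ℝ) = 2 * π * n
    linarith
  have hc3 : Real.cos (3*θ2) ≠ 1 := by
    intro h
    obtain ⟨n, hn⟩ := (Real.cos_eq_one_iff (3*θ2)).mp h
    apply hdist 3 0 (by decide) n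
    show 3*θ2 - (0:ℝ) = 2 * π * n
    linarith
  rw [crit_iff μ1 μ2 θ2 h1 h2 hc1 hc2 hc3]
  constructor
  · rintro ⟨hD2, hD13⟩
    exact forward_lemma θ2 hθ0 hθ4 hc1 hc2 hD2 hD13
  · rintro (rfl | rfl)
    · exact backward_lemma _ (Real.cos_pi_div_two)
    · refine backward_lemma _ ?_
      rw [show (3*π/2 : ℝ) = 3*(π/2) by ring, Real.cos_three_mul, Real.cos_pi_div_two]
      ring
end

section
/- The real polynomial 17x⁵ − 98x⁴ + 117x³ − 54x² + 22x − 8 has exactly three real roots, and every real root is positive. -/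
open Real Polynomial
open Set

noncomputable def qf : ℝ → ℝ := fun x => 17*x^5 - 98*x^4 + 117*x^3 - 54*x^2 + 22*x - 8

lemma qf_hasDeriv (x : ℝ) : HasDerivAt qf (85*x^4 - 392*x^3 + 351*x^2 - 108*x + 22) x := by
  have h : HasDerivAt (fun x : ℝ => 17*x^5 - 98*x^4 + 117*x^3 - 54*x^2 + 22*x - 8)
      (17*(5*x^4) - 98*(4*x^3) + 117*(3*x^2) - 54*(2*x^1) + 22*1 - 0) x := by
    exact ((((((hasDerivAt_pow 5 x).const_mul 17).sub ((hasDerivAt_pow 4 x).const_mul 98)).add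
      ((hasDerivAt_pow 3 x).const_mul 117)).sub ((hasDerivAt_pow 2 x).const_mul 54)).add
      ((hasDerivAt_id x).const_mul 22)).sub (hasDerivAt_const x 8)
  convert h using 1
  · rfl
  ring

lemma qf_deriv (x : ℝ) : deriv qf x = 85*x^4 - 392*x^3 + 351*x^2 - 108*x + 22 :=
  (qf_hasDeriv x).deriv

lemma qf_cont : Continuous qf := by
  unfold qf; continuity

lemma qf_diff : Differentiable ℝ qf := fun x => (qf_hasDeriv x).differentiableAt

-- derivative sign lemmas
lemma dpos1 (x : ℝ) (h : x ≤ 7/10) : 0 < 85*x^4 - 392*x^3 + 351*x^2 - 108*x + 22 := by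
  rcases le_or_gt x 0 with h0 | h0
  · nlinarith [sq_nonneg x, sq_nonneg (x^2), mul_nonneg (neg_nonneg.2 h0) (sq_nonneg x)]
  · nlinarith [sq_nonneg (x - 7/10), sq_nonneg x, mul_pos h0 h0, sq_nonneg (x^2 - x),
      mul_nonneg (mul_nonneg h0.le h0.le) h0.le, sq_nonneg (x^2 - 7/10*x)]

lemma dneg2 (x : ℝ) (h1 : 19/25 ≤ x) (h2 : x ≤ 7/2) :
    85*x^4 - 392*x^3 + 351*x^2 - 108*x + 22 < 0 := by
  nlinarith [mul_nonneg (sub_nonneg.2 h1) (sub_nonneg.2 h2), sq_nonneg (x-2), sq_nonneg x,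
    mul_nonneg (mul_nonneg (sub_nonneg.2 h1) (sub_nonneg.2 h2)) (sq_nonneg (x-2)),
    mul_nonneg (mul_nonneg (sub_nonneg.2 h1) (sub_nonneg.2 h2)) (sub_nonneg.2 h1),
    mul_nonneg (mul_nonneg (sub_nonneg.2 h1) (sub_nonneg.2 h2)) (sub_nonneg.2 h2)]

lemma dpos3 (x : ℝ) (h : 18/5 ≤ x) : 0 < 85*x^4 - 392*x^3 + 351*x^2 - 108*x + 22 := by
  nlinarith [sq_nonneg (x - 18/5), mul_nonneg (sub_nonneg.2 h) (sq_nonneg (x - 18/5)),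
    sub_nonneg.2 h, mul_nonneg (sub_nonneg.2 h) (sub_nonneg.2 h)]

-- value sign lemmas on gap intervals
lemma fpos_gap1 (x : ℝ) (h1 : 7/10 ≤ x) (h2 : x ≤ 19/25) : 0 < qf x := by
  unfold qf
  nlinarith [mul_nonneg (sub_nonneg.2 h1) (sub_nonneg.2 h2), sq_nonneg (x - 3/4),
    mul_nonneg (mul_nonneg (sub_nonneg.2 h1) (sub_nonneg.2 h2)) (sub_nonneg.2 h1),
    mul_nonneg (mul_nonneg (sub_nonneg.2 h1) (sub_nonneg.2 h2)) (sub_nonneg.2 h2),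
    mul_nonneg (mul_nonneg (sub_nonneg.2 h1) (sub_nonneg.2 h2)) (sq_nonneg (x-3/4))]

lemma fneg_gap2 (x : ℝ) (h1 : 7/2 ≤ x) (h2 : x ≤ 18/5) : qf x < 0 := by
  unfold qf
  nlinarith [mul_nonneg (sub_nonneg.2 h1) (sub_nonneg.2 h2), sq_nonneg (x - 71/20),
    mul_nonneg (mul_nonneg (sub_nonneg.2 h1) (sub_nonneg.2 h2)) (sub_nonneg.2 h1),
    mul_nonneg (mul_nonneg (sub_nonneg.2 h1) (sub_nonneg.2 h2)) (sub_nonneg.2 h2),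
    mul_nonneg (mul_nonneg (sub_nonneg.2 h1) (sub_nonneg.2 h2)) (sq_nonneg (x-71/20))]

-- monotonicity
lemma mono1 : StrictMonoOn qf (Iic (7/10 : ℝ)) := by
  apply strictMonoOn_of_deriv_pos (convex_Iic _) qf_cont.continuousOn
  intro x hx
  rw [interior_Iic] at hx
  rw [qf_deriv]
  exact dpos1 x hx.le

lemma anti2 : StrictAntiOn qf (Icc (19/25 : ℝ) (7/2)) := by
  apply strictAntiOn_of_deriv_neg (convex_Icc _ _) qf_cont.continuousOn
  intro x hx
  rw [interior_Icc] at hx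
  rw [qf_deriv]
  exact dneg2 x hx.1.le hx.2.le

lemma mono3 : StrictMonoOn qf (Ici (18/5 : ℝ)) := by
  apply strictMonoOn_of_deriv_pos (convex_Ici _) qf_cont.continuousOn
  intro x hx
  rw [interior_Ici] at hx
  rw [qf_deriv]
  exact dpos3 x hx.le

-- uniqueness within index classes
noncomputable def gidx : ℝ → Fin 3 := fun x => if x ≤ 7/10 then 0 else if x ≤ 18/5 then 1 else 2

lemma root_unique {x y : ℝ} (hx : qf x = 0) (hy : qf y = 0) (h : gidx x = gidx y) : x = y := by
  have key : ∀ z : ℝ, qf z = 0 → ¬ z ≤ 7/10 → z ≤ 18/5 → z ∈ Icc (19/25 : ℝ) (7/2) := by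
    intro z hz hz1 hz2
    push_neg at hz1
    constructor
    · by_contra hc; push_neg at hc
      exact absurd hz (ne_of_gt (fpos_gap1 z hz1.le hc.le))
    · by_contra hc; push_neg at hc
      exact absurd hz (ne_of_lt (fneg_gap2 z hc.le hz2))
  rcases le_or_gt x (7/10) with hx1 | hx1 <;> rcases le_or_gt y (7/10) with hy1 | hy1
  · exact mono1.injOn hx1 hy1 (hx.trans hy.symm)
  · exfalso
    rcases le_or_gt y (18/5) with hy2 | hy2
    · simp [gidx, hx1, not_le.2 hy1, hy2] at h
    · simp [gidx, hx1, not_le.2 hy1, not_le.2 hy2] at h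
  · exfalso
    rcases le_or_gt x (18/5) with hx2 | hx2
    · simp [gidx, hy1, not_le.2 hx1, hx2] at h
    · simp [gidx, hy1, not_le.2 hx1, not_le.2 hx2] at h
  · rcases le_or_gt x (18/5) with hx2 | hx2 <;> rcases le_or_gt y (18/5) with hy2 | hy2
    · exact anti2.injOn (key x hx (not_le.2 hx1) hx2) (key y hy (not_le.2 hy1) hy2)
        (hx.trans hy.symm)
    · exfalso; simp [gidx, not_le.2 hx1, not_le.2 hy1, hx2, not_le.2 hy2] at h
    · exfalso; simp [gidx, not_le.2 hx1, not_le.2 hy1, hy2, not_le.2 hx2] at h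
    · exact mono3.injOn hx2.le hy2.le (hx.trans hy.symm)

-- existence of three roots via IVT
lemma exists_roots : ∃ b1 b2 b3 : ℝ, qf b1 = 0 ∧ qf b2 = 0 ∧ qf b3 = 0 ∧
    0 < b1 ∧ b1 < 7/10 ∧ 19/25 < b2 ∧ b2 < 1 ∧ 18/5 < b3 := by
  have h1 : (0:ℝ) ∈ Ioo (qf 0) (qf (7/10)) := by
    constructor
    · show qf 0 < 0; unfold qf; norm_num
    · exact fpos_gap1 (7/10) le_rfl (by norm_num)
  obtain ⟨b1, hb1, hfb1⟩ := intermediate_value_Ioo (by norm_num : (0:ℝ) ≤ 7/10)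
    qf_cont.continuousOn h1
  have h2 : (0:ℝ) ∈ Ioo (qf 1) (qf (19/25)) := by
    constructor
    · show qf 1 < 0; unfold qf; norm_num
    · exact fpos_gap1 (19/25) (by norm_num) le_rfl
  obtain ⟨b2, hb2, hfb2⟩ := intermediate_value_Ioo' (by norm_num : (19/25:ℝ) ≤ 1)
    qf_cont.continuousOn h2
  have h3 : (0:ℝ) ∈ Ioo (qf (18/5)) (qf 5) := by
    constructor
    · exact fneg_gap2 (18/5) (by norm_num) le_rfl
    · show (0:ℝ) < qf 5; unfold qf; norm_num
  obtain ⟨b3, hb3, hfb3⟩ := intermediate_value_Ioo (by norm_num : (18/5:ℝ) ≤ 5)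
    qf_cont.continuousOn h3
  exact ⟨b1, b2, b3, hfb1, hfb2, hfb3, hb1.1, hb1.2, hb2.1, hb2.2, hb3.1⟩

/-- The quintic `17x^5 - 98x^4 + 117x^3 - 54x^2 + 22x - 8` has exactly three
real roots, all positive. -/
theorem quintic_three_positive_roots :
    (C (17 : ℝ) * X ^ 5 - C 98 * X ^ 4 + C 117 * X ^ 3 - C 54 * X ^ 2 +
        C 22 * X - C 8).roots.toFinset.card = 3 ∧
    ∀ x : ℝ, (C (17 : ℝ) * X ^ 5 - C 98 * X ^ 4 + C 117 * X ^ 3 - C 54 * X ^ 2 +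
        C 22 * X - C 8).IsRoot x → 0 < x := by
  set P : ℝ[X] := C (17 : ℝ) * X ^ 5 - C 98 * X ^ 4 + C 117 * X ^ 3 - C 54 * X ^ 2 +
      C 22 * X - C 8 with hP
  have heval : ∀ x : ℝ, P.eval x = qf x := by
    intro x
    simp only [hP, eval_add, eval_sub, eval_mul, eval_pow, eval_C, eval_X, qf]
  have hP0 : P ≠ 0 := by
    intro h
    have := heval 0
    rw [h] at this
    simp [qf] at this
  have hmem : ∀ x : ℝ, x ∈ P.roots.toFinset ↔ qf x = 0 := by
    intro x
    rw [Multiset.mem_toFinset, mem_roots hP0, IsRoot, heval]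
  have hpos : ∀ x : ℝ, qf x = 0 → 0 < x := by
    intro x hx
    by_contra hc
    push_neg at hc
    have : qf x < 0 := by
      unfold qf
      nlinarith [mul_nonneg (neg_nonneg.2 hc) (sq_nonneg x), sq_nonneg x, sq_nonneg (x^2),
        mul_nonneg (mul_nonneg (neg_nonneg.2 hc) (sq_nonneg x)) (sq_nonneg x)]
    exact absurd hx this.ne
  constructor
  · apply le_antisymm
    · -- card ≤ 3
      have := Finset.card_le_card_of_injOn gidx
        (fun x _ => Finset.mem_univ (gidx x))
        (fun x hx y hy hxy => root_unique ((hmem x).1 hx) ((hmem y).1 hy) hxy)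
      simpa using this
    · -- 3 ≤ card
      obtain ⟨b1, b2, b3, h1, h2, h3, hp1, hu1, hl2, hu2, hl3⟩ := exists_roots
      have h12 : b1 ≠ b2 := by linarith
      have h13 : b1 ≠ b3 := by linarith
      have h23 : b2 ≠ b3 := by linarith
      have hsub : ({b1, b2, b3} : Finset ℝ) ⊆ P.roots.toFinset := by
        intro x hx
        simp only [Finset.mem_insert, Finset.mem_singleton] at hx
        rcases hx with rfl | rfl | rfl
        · exact (hmem x).2 h1
        · exact (hmem x).2 h2
        · exact (hmem x).2 h3
      have hcard : ({b1, b2, b3} : Finset ℝ).card = 3 := by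
        rw [Finset.card_insert_of_notMem (by simp [h12, h13]),
          Finset.card_insert_of_notMem (by simp [h23]), Finset.card_singleton]
      rw [← hcard]
      exact Finset.card_le_card hsub
  · intro x hx
    exact hpos x (by rw [← heval]; exact hx)
end

section
/- The real polynomial g(r) = 13r¹⁰ − 117r⁸ + 146r⁶ − 202r⁴ + 33r² − 1 has exactly six real roots, and its set of real roots is invariant under r ↦ −r (so the real roots come in three pairs ±r). Equivalently, the polynomial 13s⁵ − 117s⁴ + 146s³ − 202s² + 33s − 1 has exactly three real roots, all positive. -/
open Real Polynomial

noncomputable def Q5 : ℝ[X] :=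
  C (13 : ℝ) * X ^ 5 - C 117 * X ^ 4 + C 146 * X ^ 3 - C 202 * X ^ 2 + C 33 * X - C 1
noncomputable def Q4 : ℝ[X] :=
  C (65 : ℝ) * X ^ 4 - C 468 * X ^ 3 + C 438 * X ^ 2 - C 404 * X + C 33
noncomputable def Q3 : ℝ[X] :=
  C (260 : ℝ) * X ^ 3 - C 1404 * X ^ 2 + C 876 * X - C 404
noncomputable def G10 : ℝ[X] :=
  C (13 : ℝ) * X ^ 10 - C 117 * X ^ 8 + C 146 * X ^ 6 - C 202 * X ^ 4 + C 33 * X ^ 2 - C 1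

lemma Q5_eval (x : ℝ) : Q5.eval x = 13*x^5 - 117*x^4 + 146*x^3 - 202*x^2 + 33*x - 1 := by
  simp [Q5]

lemma Q3_eval (x : ℝ) : Q3.eval x = 260*x^3 - 1404*x^2 + 876*x - 404 := by simp [Q3]

lemma G10_eval (x : ℝ) : G10.eval x = Q5.eval (x^2) := by
  simp [G10, Q5]; ring

lemma Q5_ne : Q5 ≠ 0 := by
  intro h
  have h0 := Q5_eval 0
  rw [h, eval_zero] at h0
  norm_num at h0

lemma Q3_ne : Q3 ≠ 0 := by
  intro h
  have h0 := Q3_eval 0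
  rw [h, eval_zero] at h0
  norm_num at h0

lemma G10_ne : G10 ≠ 0 := by
  intro h
  have h0 := G10_eval 0
  rw [h, eval_zero, Q5_eval] at h0
  norm_num at h0

lemma dQ5 : derivative Q5 = Q4 := by
  apply Polynomial.funext
  intro x
  simp [Q5, Q4]
  ring

lemma dQ4 : derivative Q4 = Q3 := by
  apply Polynomial.funext
  intro x
  simp [Q4, Q3]
  ring

lemma Q3_root_gt {x : ℝ} (hx : Q3.IsRoot x) : 18/5 < x := by
  by_contra h
  push_neg at h
  have h0 : Q3.eval x = 0 := hx
  rw [Q3_eval] at h0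
  nlinarith [sq_nonneg (x - 69/200), mul_nonneg (sub_nonneg.2 h) (sq_nonneg (x - 69/200)),
    sq_nonneg x, mul_nonneg (sub_nonneg.2 h) (sq_nonneg x)]

lemma Q3_card : Q3.roots.toFinset.card ≤ 1 := by
  apply Finset.card_le_one.2
  intro a ha b hb
  rw [Multiset.mem_toFinset, mem_roots Q3_ne] at ha hb
  have ha' : Q3.eval a = 0 := ha
  have hb' : Q3.eval b = 0 := hb
  rw [Q3_eval] at ha' hb'
  have hag := Q3_root_gt ha
  have hbg := Q3_root_gt hb
  rcases lt_trichotomy a b with h | h | h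
  · exfalso
    nlinarith [mul_pos (sub_pos.2 h) (sub_pos.2 hag), mul_pos (sub_pos.2 h) (sub_pos.2 hbg),
      mul_pos (mul_pos (sub_pos.2 h) (sub_pos.2 hag)) (sub_pos.2 hbg)]
  · exact h
  · exfalso
    nlinarith [mul_pos (sub_pos.2 h) (sub_pos.2 hag), mul_pos (sub_pos.2 h) (sub_pos.2 hbg),
      mul_pos (mul_pos (sub_pos.2 h) (sub_pos.2 hbg)) (sub_pos.2 hag)]

lemma Q4_card : Q4.roots.toFinset.card ≤ 2 := by
  have h := Q4.card_roots_toFinset_le_derivative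
  rw [dQ4] at h
  have := Q3_card
  omega

lemma Q5_card_le : Q5.roots.toFinset.card ≤ 3 := by
  have h := Q5.card_roots_toFinset_le_derivative
  rw [dQ5] at h
  have := Q4_card
  omega

lemma Q5_root_pos {x : ℝ} (hx : Q5.IsRoot x) : 0 < x := by
  by_contra h
  push_neg at h
  have h0 : Q5.eval x = 0 := hx
  rw [Q5_eval] at h0
  nlinarith [sq_nonneg x, sq_nonneg (x^2),
    mul_nonneg (mul_nonneg (neg_nonneg.2 h) (sq_nonneg x)) (sq_nonneg x),
    mul_nonneg (neg_nonneg.2 h) (sq_nonneg x)]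

lemma Q5_root_exists (a b : ℝ) (hab : a ≤ b)
    (h : Q5.eval a < 0 ∧ 0 < Q5.eval b ∨ 0 < Q5.eval a ∧ Q5.eval b < 0) :
    ∃ x ∈ Set.Icc a b, Q5.IsRoot x := by
  rcases h with ⟨h1, h2⟩ | ⟨h1, h2⟩
  · have := intermediate_value_Icc hab Q5.continuousOn
    have h0 : (0 : ℝ) ∈ Set.Icc (Q5.eval a) (Q5.eval b) := ⟨h1.le, h2.le⟩
    obtain ⟨x, hx, hx0⟩ := this h0
    exact ⟨x, hx, hx0⟩
  · have := intermediate_value_Icc' hab Q5.continuousOn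
    have h0 : (0 : ℝ) ∈ Set.Icc (Q5.eval b) (Q5.eval a) := ⟨h2.le, h1.le⟩
    obtain ⟨x, hx, hx0⟩ := this h0
    exact ⟨x, hx, hx0⟩

lemma Q5_sign0 : Q5.eval 0 < 0 := by rw [Q5_eval]; norm_num
lemma Q5_sign1 : 0 < Q5.eval (1/20) := by rw [Q5_eval]; norm_num
lemma Q5_sign2 : Q5.eval (3/20) < 0 := by rw [Q5_eval]; norm_num
lemma Q5_sign3 : 0 < Q5.eval 8 := by rw [Q5_eval]; norm_num

lemma Q5_three_roots : ∃ s1 s2 s3 : ℝ, Q5.IsRoot s1 ∧ Q5.IsRoot s2 ∧ Q5.IsRoot s3 ∧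
    s1 < s2 ∧ s2 < s3 := by
  obtain ⟨s1, hs1m, hs1⟩ := Q5_root_exists 0 (1/20) (by norm_num) (Or.inl ⟨Q5_sign0, Q5_sign1⟩)
  obtain ⟨s2, hs2m, hs2⟩ := Q5_root_exists (1/20) (3/20) (by norm_num)
    (Or.inr ⟨Q5_sign1, Q5_sign2⟩)
  obtain ⟨s3, hs3m, hs3⟩ := Q5_root_exists (3/20) 8 (by norm_num) (Or.inl ⟨Q5_sign2, Q5_sign3⟩)
  refine ⟨s1, s2, s3, hs1, hs2, hs3, ?_, ?_⟩
  · rcases lt_or_eq_of_le (le_trans hs1m.2 hs2m.1) with h | h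
    · exact h
    · exfalso
      have h1 : s1 = 1/20 := le_antisymm hs1m.2 (h ▸ hs2m.1)
      rw [h1] at hs1
      exact absurd (hs1 : Q5.eval (1/20) = 0) (ne_of_gt Q5_sign1)
  · rcases lt_or_eq_of_le (le_trans hs2m.2 hs3m.1) with h | h
    · exact h
    · exfalso
      have h1 : s2 = 3/20 := le_antisymm hs2m.2 (h ▸ hs3m.1)
      rw [h1] at hs2
      exact absurd (hs2 : Q5.eval (3/20) = 0) (ne_of_lt Q5_sign2)

lemma Q5_card : Q5.roots.toFinset.card = 3 := by
  obtain ⟨s1, s2, s3, h1, h2, h3, h12, h23⟩ := Q5_three_roots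
  refine le_antisymm Q5_card_le ?_
  have hsub : ({s1, s2, s3} : Finset ℝ) ⊆ Q5.roots.toFinset := by
    intro x hx
    simp only [Finset.mem_insert, Finset.mem_singleton] at hx
    rw [Multiset.mem_toFinset, mem_roots Q5_ne]
    rcases hx with rfl | rfl | rfl
    exacts [h1, h2, h3]
  have hcard : ({s1, s2, s3} : Finset ℝ).card = 3 := by
    rw [Finset.card_insert_of_notMem, Finset.card_insert_of_notMem, Finset.card_singleton]
    · simp only [Finset.mem_singleton]; exact ne_of_lt h23
    · simp only [Finset.mem_insert, Finset.mem_singleton]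
      push_neg
      exact ⟨ne_of_lt h12, ne_of_lt (h12.trans h23)⟩
  calc 3 = ({s1, s2, s3} : Finset ℝ).card := hcard.symm
    _ ≤ _ := Finset.card_le_card hsub

lemma G10_symm (x : ℝ) : G10.IsRoot x ↔ G10.IsRoot (-x) := by
  rw [IsRoot, IsRoot, G10_eval, G10_eval, neg_sq]

lemma G10_card : G10.roots.toFinset.card = 6 := by
  obtain ⟨s1, s2, s3, h1, h2, h3, h12, h23⟩ := Q5_three_roots
  have hp1 : 0 < s1 := Q5_root_pos h1
  have hp2 : 0 < s2 := Q5_root_pos h2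
  have hp3 : 0 < s3 := Q5_root_pos h3
  have hsub : ({s1, s2, s3} : Finset ℝ) ⊆ Q5.roots.toFinset := by
    intro x hx
    simp only [Finset.mem_insert, Finset.mem_singleton] at hx
    rw [Multiset.mem_toFinset, mem_roots Q5_ne]
    rcases hx with rfl | rfl | rfl
    exacts [h1, h2, h3]
  have hcard3 : ({s1, s2, s3} : Finset ℝ).card = 3 := by
    rw [Finset.card_insert_of_notMem, Finset.card_insert_of_notMem, Finset.card_singleton]
    · simp only [Finset.mem_singleton]; exact ne_of_lt h23
    · simp only [Finset.mem_insert, Finset.mem_singleton]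
      push_neg
      exact ⟨ne_of_lt h12, ne_of_lt (h12.trans h23)⟩
  have hRoots : Q5.roots.toFinset = {s1, s2, s3} :=
    (Finset.eq_of_subset_of_card_le hsub (Q5_card_le.trans hcard3.ge)).symm
  set r1 := Real.sqrt s1 with hr1def
  set r2 := Real.sqrt s2 with hr2def
  set r3 := Real.sqrt s3 with hr3def
  have hr1 : r1 ^ 2 = s1 := Real.sq_sqrt hp1.le
  have hr2 : r2 ^ 2 = s2 := Real.sq_sqrt hp2.le
  have hr3 : r3 ^ 2 = s3 := Real.sq_sqrt hp3.le
  have hr1p : 0 < r1 := Real.sqrt_pos.2 hp1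
  have hr12 : r1 < r2 := Real.sqrt_lt_sqrt hp1.le h12
  have hr23 : r2 < r3 := Real.sqrt_lt_sqrt hp2.le h23
  have hS : G10.roots.toFinset = ({-r3, -r2, -r1, r1, r2, r3} : Finset ℝ) := by
    apply Finset.Subset.antisymm
    · intro x hx
      rw [Multiset.mem_toFinset, mem_roots G10_ne] at hx
      have hx2 : Q5.IsRoot (x ^ 2) := by rwa [IsRoot, ← G10_eval]
      have hxm : x ^ 2 ∈ Q5.roots.toFinset := by
        rw [Multiset.mem_toFinset, mem_roots Q5_ne]; exact hx2
      rw [hRoots] at hxm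
      simp only [Finset.mem_insert, Finset.mem_singleton] at hxm ⊢
      rcases hxm with hs | hs | hs
      · have : (x - r1) * (x + r1) = 0 := by linear_combination hs - hr1
        rcases mul_eq_zero.1 this with h | h
        · exact Or.inr (Or.inr (Or.inr (Or.inl (by linarith))))
        · exact Or.inr (Or.inr (Or.inl (by linarith)))
      · have : (x - r2) * (x + r2) = 0 := by linear_combination hs - hr2
        rcases mul_eq_zero.1 this with h | h
        · exact Or.inr (Or.inr (Or.inr (Or.inr (Or.inl (by linarith)))))
        · exact Or.inr (Or.inl (by linarith))
      · have : (x - r3) * (x + r3) = 0 := by linear_combination hs - hr3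
        rcases mul_eq_zero.1 this with h | h
        · exact Or.inr (Or.inr (Or.inr (Or.inr (Or.inr (by linarith)))))
        · exact Or.inl (by linarith)
    · intro x hx
      simp only [Finset.mem_insert, Finset.mem_singleton] at hx
      rw [Multiset.mem_toFinset, mem_roots G10_ne]
      have key : ∀ r s : ℝ, r ^ 2 = s → Q5.IsRoot s → G10.IsRoot r := by
        intro r s hrs hroot
        rw [IsRoot, G10_eval, hrs]; exact hroot
      rcases hx with rfl | rfl | rfl | rfl | rfl | rfl
      · exact key _ s3 (by rw [neg_pow]; simp [hr3]) h3
      · exact key _ s2 (by rw [neg_pow]; simp [hr2]) h2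
      · exact key _ s1 (by rw [neg_pow]; simp [hr1]) h1
      · exact key _ s1 hr1 h1
      · exact key _ s2 hr2 h2
      · exact key _ s3 hr3 h3
  rw [hS]
  rw [Finset.card_insert_of_notMem, Finset.card_insert_of_notMem,
    Finset.card_insert_of_notMem, Finset.card_insert_of_notMem,
    Finset.card_insert_of_notMem, Finset.card_singleton] <;>
    simp only [Finset.mem_insert, Finset.mem_singleton] <;> push_neg <;>
    (repeat' apply And.intro) <;> (intro h; linarith)


/-- The even degree-10 polynomial `g` has exactly six real roots, with root
set symmetric under negation; equivalently the degree-5 polynomial in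
`s = r^2` has exactly three real roots, all positive. -/
theorem g_six_real_roots :
    (C (13 : ℝ) * X ^ 10 - C 117 * X ^ 8 + C 146 * X ^ 6 - C 202 * X ^ 4 +
        C 33 * X ^ 2 - C 1).roots.toFinset.card = 6 ∧
    (∀ x : ℝ, (C (13 : ℝ) * X ^ 10 - C 117 * X ^ 8 + C 146 * X ^ 6 - C 202 * X ^ 4 +
        C 33 * X ^ 2 - C 1).IsRoot x ↔
      (C (13 : ℝ) * X ^ 10 - C 117 * X ^ 8 + C 146 * X ^ 6 - C 202 * X ^ 4 +
        C 33 * X ^ 2 - C 1).IsRoot (-x)) ∧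
    (C (13 : ℝ) * X ^ 5 - C 117 * X ^ 4 + C 146 * X ^ 3 - C 202 * X ^ 2 +
        C 33 * X - C 1).roots.toFinset.card = 3 ∧
    ∀ x : ℝ, (C (13 : ℝ) * X ^ 5 - C 117 * X ^ 4 + C 146 * X ^ 3 - C 202 * X ^ 2 +
        C 33 * X - C 1).IsRoot x → 0 < x := by
  exact ⟨G10_card, G10_symm, Q5_card, fun x hx => Q5_root_pos hx⟩
end
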